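/- arXiv:1505.02418 — 3 statements merged into one kernel-verified Lean document; each statement's English description precedes it below -/
import Mathlib

section
/- Existence of minimizers for the capped problems: On a complete probability space carrying a càdlàg process L with law P₀, equipped with the right-continuous complete filtration F̄^L_+ generated by L, let 𝒰^{[n]} be the set of F̄^L_+-progressively measurable processes u : [0,T] × Ω → [0,n]^k, and for u ∈ 𝒰^{[n]} set J(u) = E[C(L, ∫_0^· u_s ds)]. Under hypothesis (3) (in particular the polynomial growth condition (3c), which makes J finite on 𝒰^{[n]}), the infimum inf_{u ∈ 𝒰^{[n]}} J(u) is attained at some u^{[n]} ∈ 𝒰^{[n]}. -/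
open MeasureTheory Set Filter MeasurableSpace
open scoped ENNReal symmDiff

noncomputable section

/-- `ℝ^N` with the Euclidean norm. -/
abbrev Rvec (N : ℕ) := EuclideanSpace ℝ (Fin N)

/-- A function is càdlàg on `[0,T]`: right-continuous on `[0,T)` with left limits on `(0,T]`. -/
def CadlagOn {E : Type*} [TopologicalSpace E] (T : ℝ) (x : ℝ → E) : Prop :=
  (∀ t ∈ Ico (0:ℝ) T, ContinuousWithinAt x (Ici t) t) ∧
  (∀ t ∈ Ioc (0:ℝ) T, ∃ l : E, Tendsto x (nhdsWithin t (Iio t)) (nhds l))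

/-- The nonnegative orthant `[0,∞)^k`. -/
def orthant (k : ℕ) : Set (Rvec k) := {a | ∀ i, 0 ≤ a i}

/-- The canonical monotone-follower path space `D^{d+k}_{·,↑}(L,A)`: the first `d`
coordinates (the target `L`) are càdlàg on `[0,T]`, the last `k` coordinates
(the follower `A`) are càdlàg, componentwise nondecreasing on `[0,T]` with `A_0 ≥ 0`. -/
def MFPath (d k : ℕ) (T : ℝ) : Type :=
  { ω : ℝ → Rvec d × Rvec k //
      CadlagOn T (fun t => (ω t).1) ∧ CadlagOn T (fun t => (ω t).2) ∧
      (∀ i, MonotoneOn (fun t => (ω t).2 i) (Icc 0 T)) ∧ (∀ i, 0 ≤ (ω 0).2 i) }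

/-- The σ-algebra generated by the coordinate maps. -/
instance (d k : ℕ) (T : ℝ) : MeasurableSpace (MFPath d k T) :=
  inferInstanceAs (MeasurableSpace
    { ω : ℝ → Rvec d × Rvec k //
      CadlagOn T (fun t => (ω t).1) ∧ CadlagOn T (fun t => (ω t).2) ∧
      (∀ i, MonotoneOn (fun t => (ω t).2 i) (Icc 0 T)) ∧ (∀ i, 0 ≤ (ω 0).2 i) })

/-- The target coordinate process. -/
def MF.L {d k : ℕ} {T : ℝ} (ω : MFPath d k T) : ℝ → Rvec d := fun t => (ω.1 t).1

/-- The follower coordinate process. -/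
def MF.A {d k : ℕ} {T : ℝ} (ω : MFPath d k T) : ℝ → Rvec k := fun t => (ω.1 t).2

/-- `F^A_t = σ(A_s : 0 ≤ s ≤ t)`. -/
def sigmaA (d k : ℕ) (T t : ℝ) : MeasurableSpace (MFPath d k T) :=
  ⨆ s ∈ Icc (0:ℝ) t, MeasurableSpace.comap (fun ω => MF.A ω s) inferInstance

/-- `F^L_t = σ(L_s : 0 ≤ s ≤ min t T)`. -/
def sigmaL (d k : ℕ) (T t : ℝ) : MeasurableSpace (MFPath d k T) :=
  ⨆ s ∈ Icc (0:ℝ) (min t T), MeasurableSpace.comap (fun ω => MF.L ω s) inferInstance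

/-- `F^L_{t+} = ⋂_{s>t} F^L_s`. -/
def sigmaLplus (d k : ℕ) (T t : ℝ) : MeasurableSpace (MFPath d k T) :=
  ⨅ s ∈ Ioi t, sigmaL d k T s

/-- Conditional independence of `m₁` and `m₂` given `m'` under `μ`, expressed through
conditional expectations of indicators. -/
def CondIndepGiven {Ω : Type*} [MeasurableSpace Ω] (μ : Measure Ω)
    (m₁ m₂ m' : MeasurableSpace Ω) : Prop :=
  ∀ s, MeasurableSet[m₁] s → ∀ u, MeasurableSet[m₂] u →
    μ[(s ∩ u).indicator (fun _ => (1:ℝ)) | m'] =ᵐ[μ]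
      μ[s.indicator (fun _ => (1:ℝ)) | m'] * μ[u.indicator (fun _ => (1:ℝ)) | m']

/-- Admissible controls: the `L`-marginal is the prescribed law `P0` and, for every
`t ∈ [0,T]`, `F^A_t` and `F^L_T` are conditionally independent given `F^L_{t+}`. -/
structure IsAdmissible (d k : ℕ) (T : ℝ) (P0 : Measure (ℝ → Rvec d))
    (P : Measure (MFPath d k T)) : Prop where
  prob : IsProbabilityMeasure P
  marginal : P.map (fun ω => MF.L ω) = P0
  condIndep : ∀ t ∈ Icc (0:ℝ) T,
    CondIndepGiven P (sigmaA d k T t) (sigmaL d k T T) (sigmaLplus d k T t)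

/-- Strongly admissible: admissible and `F^A_t ⊆ F^L_{t+}` up to `P`-null sets. -/
def IsStronglyAdmissible (d k : ℕ) (T : ℝ) (P0 : Measure (ℝ → Rvec d))
    (P : Measure (MFPath d k T)) : Prop :=
  IsAdmissible d k T P0 P ∧
    ∀ t ∈ Icc (0:ℝ) T, ∀ s : Set (MFPath d k T), MeasurableSet[sigmaA d k T t] s →
      ∃ s' : Set (MFPath d k T), MeasurableSet[sigmaLplus d k T t] s' ∧ P (s ∆ s') = 0

/-- Extension of a path on `[0,T]` to all of `ℝ` by capping time. -/
def extOn (T : ℝ) (a : ℝ → ℝ) : ℝ → ℝ := fun t => a (max 0 (min t T))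

open Classical in
/-- The Lebesgue–Stieltjes measure of a nondecreasing right-continuous function
(junk value `0` otherwise). -/
def lsMeasure (a : ℝ → ℝ) : Measure ℝ :=
  if hyp : Monotone a ∧ ∀ x, ContinuousWithinAt a (Ici x) x
  then StieltjesFunction.measure ⟨a, hyp.1, hyp.2⟩
  else 0

/-- `∫_{[0,T]} ψ(t)·dA_t = ψ(0)·A_0 + ∫_{(0,T]} ψ(t)·dA_t`, with the convention
`A_{0-} = 0` (so the initial jump `A_0` is charged at time `0`). -/
def stInt (T : ℝ) {k : ℕ} (ψ : ℝ → Rvec k) (a : ℝ → Rvec k) : ℝ≥0∞ :=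
  ∑ i, (ENNReal.ofReal (ψ 0 i * a 0 i) +
    ∫⁻ t in Ioc (0:ℝ) T, ENNReal.ofReal (ψ t i) ∂ lsMeasure (extOn T (fun s => a s i)))

/-- The cost functional `C(L,A) = ∫_{[0,T]} f·dA + ∫_0^T h(L_t,A_t) dt + g(L_T,A_T)`. -/
def costC (d k : ℕ) (T : ℝ) (f : ℝ → Rvec k) (h g : Rvec d → Rvec k → ℝ)
    (ω : MFPath d k T) : ℝ≥0∞ :=
  stInt T f (MF.A ω) +
    (∫⁻ t in Ioc (0:ℝ) T, ENNReal.ofReal (h (MF.L ω t) (MF.A ω t))) +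
    ENNReal.ofReal (g (MF.L ω T) (MF.A ω T))

/-- The expected cost `J(P) = E^P[C(L,A)] ∈ [0,∞]`. -/
def mfCost (d k : ℕ) (T : ℝ) (f : ℝ → Rvec k) (h g : Rvec d → Rvec k → ℝ)
    (P : Measure (MFPath d k T)) : ℝ≥0∞ :=
  ∫⁻ ω, costC d k T f h g ω ∂P

/-- The value `V = inf_{P ∈ 𝒜} J(P)` of the monotone-follower problem. -/
def mfValue (d k : ℕ) (T : ℝ) (P0 : Measure (ℝ → Rvec d))
    (f : ℝ → Rvec k) (h g : Rvec d → Rvec k → ℝ) : ℝ≥0∞ :=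
  ⨅ (P : Measure (MFPath d k T)) (_ : IsAdmissible d k T P0 P), mfCost d k T f h g P

open scoped RealInnerProductSpace

/-- `F^L_t = σ(L_s : 0 ≤ s ≤ min t T)` for a process `L` on an abstract space. -/
def sigmaProc {Ω : Type*} {d : ℕ} (T : ℝ) (L : Ω → ℝ → Rvec d) (t : ℝ) :
    MeasurableSpace Ω :=
  ⨆ s ∈ Icc (0:ℝ) (min t T), MeasurableSpace.comap (fun ω => L ω s) inferInstance

/-- The σ-algebra generated by the `μ`-null sets. -/
def nullSigma {Ω : Type*} [MeasurableSpace Ω] (μ : Measure Ω) : MeasurableSpace Ω :=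
  MeasurableSpace.generateFrom {N : Set Ω | μ N = 0}

/-- `F̄^L_{t+}`: the right-continuous complete augmentation of the filtration
generated by `L`. -/
def sigmaBarPlus {Ω : Type*} [MeasurableSpace Ω] (μ : Measure Ω) {d : ℕ} (T : ℝ)
    (L : Ω → ℝ → Rvec d) (t : ℝ) : MeasurableSpace Ω :=
  ⨅ s ∈ Ioi t, (sigmaProc T L s ⊔ nullSigma μ)

/-- Progressive measurability of `u` with respect to the filtration `F`: for every
`t ∈ [0,T]`, the map `[0,t] × Ω ∋ (s,ω) ↦ u s ω` is `B([0,t]) ⊗ F t`-measurable. -/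
def ProgMeas {Ω : Type*} {k : ℕ} (T : ℝ) (F : ℝ → MeasurableSpace Ω)
    (u : ℝ → Ω → Rvec k) : Prop :=
  ∀ t ∈ Icc (0:ℝ) T, @Measurable (Icc (0:ℝ) t × Ω) (Rvec k)
    (@Prod.instMeasurableSpace _ _ _ (F t)) _ (fun p => u (p.1 : ℝ) p.2)

/-- The class `𝒰^{[n]}` of progressively measurable controls with values in `[0,n]^k`. -/
def Ucap {Ω : Type*} [MeasurableSpace Ω] (μ : Measure Ω) {d : ℕ} (k : ℕ) (T : ℝ)
    (L : Ω → ℝ → Rvec d) (n : ℕ) : Set (ℝ → Ω → Rvec k) :=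
  {u | ProgMeas T (sigmaBarPlus μ T L) u ∧ ∀ t ω i, u t ω i ∈ Icc (0:ℝ) n}

/-- `A_t = ∫_0^t u_s ds`. -/
def Acap {Ω : Type*} {k : ℕ} (u : ℝ → Ω → Rvec k) (t : ℝ) (ω : Ω) : Rvec k :=
  ∫ s in Ioc (0:ℝ) t, u s ω

/-- The cost `J(u) = E[∫_0^T f(t)·u_t dt + ∫_0^T h(L_t,A_t) dt + g(L_T,A_T)]`
of a capped control (note `∫_{[0,T]} f·dA = ∫_0^T f(t)·u_t dt` here). -/
def capCost {Ω : Type*} [MeasurableSpace Ω] (μ : Measure Ω) {d k : ℕ} (T : ℝ)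
    (L : Ω → ℝ → Rvec d) (f : ℝ → Rvec k) (h g : Rvec d → Rvec k → ℝ)
    (u : ℝ → Ω → Rvec k) : ℝ≥0∞ :=
  ∫⁻ ω, (ENNReal.ofReal (∫ t in Ioc (0:ℝ) T, ⟪f t, u t ω⟫) +
    (∫⁻ t in Ioc (0:ℝ) T, ENNReal.ofReal (h (L ω t) (Acap u t ω))) +
    ENNReal.ofReal (g (L ω T) (Acap u T ω))) ∂μ

open scoped Topology

set_option linter.unusedSectionVars false
set_option linter.unusedVariables false

namespace MFProof

/-! ### clamp -/

/-- clamp to `[0,T]` -/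
def cl (T t : ℝ) : ℝ := max 0 (min t T)

lemma cl_mem {T : ℝ} (hT : 0 ≤ T) (t : ℝ) : cl T t ∈ Icc (0:ℝ) T :=
  ⟨le_max_left _ _, max_le (by linarith) (min_le_right _ _)⟩

lemma cl_eq {T t : ℝ} (ht : t ∈ Icc (0:ℝ) T) : cl T t = t := by
  simp only [cl, min_eq_left ht.2, max_eq_right ht.1]

lemma continuous_cl {T : ℝ} : Continuous (cl T) := by
  unfold cl; fun_prop

/-! ### Euclidean coordinates -/

lemma norm_le_of_Icc {k n : ℕ} {v : Rvec k} (hv : ∀ i, v i ∈ Icc (0:ℝ) n) :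
    ‖v‖ ≤ n * Real.sqrt k := by
  rw [EuclideanSpace.norm_eq]
  have h1 : ∑ i, ‖v i‖ ^ 2 ≤ ∑ _i : Fin k, (n : ℝ) ^ 2 := by
    refine Finset.sum_le_sum fun i _ => ?_
    rw [Real.norm_eq_abs, abs_of_nonneg (hv i).1]
    exact pow_le_pow_left₀ (hv i).1 (hv i).2 2
  have h2 : Real.sqrt (∑ i, ‖v i‖ ^ 2) ≤ Real.sqrt ((k : ℝ) * (n : ℝ) ^ 2) := by
    refine Real.sqrt_le_sqrt ?_
    simpa [Finset.sum_const, Finset.card_univ, nsmul_eq_mul] using h1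
  refine h2.trans_eq ?_
  rw [Real.sqrt_mul (by positivity), Real.sqrt_sq (by positivity)]
  ring

lemma inner_coords {k : ℕ} (x y : Rvec k) : ⟪x, y⟫ = ∑ i, x i * y i := by
  simp [PiLp.inner_apply, RCLike.inner_apply]
  exact Finset.sum_congr rfl fun _ _ => mul_comm _ _

lemma inner_nonneg_of_coords {k : ℕ} {x y : Rvec k} (hx : ∀ i, 0 ≤ x i) (hy : ∀ i, 0 ≤ y i) :
    0 ≤ ⟪x, y⟫ := by
  rw [inner_coords]
  exact Finset.sum_nonneg fun i _ => mul_nonneg (hx i) (hy i)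

lemma abs_inner_le {k : ℕ} {n : ℕ} {C : ℝ} {x y : Rvec k} (hx : ‖x‖ ≤ C)
    (hy : ∀ i, y i ∈ Icc (0:ℝ) n) : |⟪x, y⟫| ≤ C * (n * Real.sqrt k) := by
  refine (abs_real_inner_le_norm x y).trans ?_
  have h0 : (0:ℝ) ≤ ‖y‖ := norm_nonneg _
  exact mul_le_mul hx (norm_le_of_Icc hy) h0 ((norm_nonneg x).trans hx)

/-! ### σ-algebras -/

section Meas

variable {Ω : Type*} [mΩ : MeasurableSpace Ω] {μ : Measure Ω} {d k n : ℕ} {T : ℝ}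
  {L : Ω → ℝ → Rvec d}

lemma sigma_le (hc : μ.IsComplete) (hL : ∀ s, Measurable fun ω => L ω s) (t : ℝ) :
    sigmaBarPlus μ T L t ≤ mΩ := by
  refine le_trans (iInf_le _ (t + 1)) (le_trans (iInf_le _ (by simp : t + 1 ∈ Ioi t)) ?_)
  refine sup_le ?_ ?_
  · exact iSup₂_le fun s _ => Measurable.comap_le (hL s)
  · exact MeasurableSpace.generateFrom_le fun N hN => hc.out N hN

/-- the clamped version of a control -/
def ub {Ω : Type*} {k : ℕ} (T : ℝ) (u : ℝ → Ω → Rvec k) : ℝ × Ω → Rvec k :=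
  fun p => u (cl T p.1) p.2

lemma ub_eq {u : ℝ → Ω → Rvec k} {t : ℝ} (ht : t ∈ Icc (0:ℝ) T) (ω : Ω) :
    ub T u (t, ω) = u t ω := by simp [ub, cl_eq ht]

lemma prodSigma_mono {α β : Type*} (m1 : MeasurableSpace α) {m m' : MeasurableSpace β}
    (hm : m ≤ m') :
    (@Prod.instMeasurableSpace α β m1 m) ≤ (@Prod.instMeasurableSpace α β m1 m') :=
  sup_le_sup (le_refl (MeasurableSpace.comap Prod.fst m1)) (MeasurableSpace.comap_mono hm)

lemma ub_meas (hT : 0 < T) (hc : μ.IsComplete) (hL : ∀ s, Measurable fun ω => L ω s)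
    {u : ℝ → Ω → Rvec k} (hu : ProgMeas T (sigmaBarPlus μ T L) u) :
    Measurable (ub T u) := by
  have h1 : @Measurable (Icc (0:ℝ) T × Ω) (Rvec k)
      (@Prod.instMeasurableSpace _ _ _ (sigmaBarPlus μ T L T)) _
      (fun p => u (p.1 : ℝ) p.2) := hu T ⟨hT.le, le_rfl⟩
  have h2 : Measurable (fun p : Icc (0:ℝ) T × Ω => u (p.1 : ℝ) p.2) :=
    h1.mono (prodSigma_mono _ (sigma_le hc hL T)) le_rfl
  have h3 : Measurable fun p : ℝ × Ω => ((⟨cl T p.1, cl_mem hT.le p.1⟩ : Icc (0:ℝ) T), p.2) :=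
    ((continuous_cl.measurable.comp measurable_fst).subtype_mk).prodMk measurable_snd
  exact h2.comp h3

end Meas

end MFProof

namespace MFProof
section Meas

variable {Ω : Type*} [mΩ : MeasurableSpace Ω] {μ : Measure Ω} {d k n : ℕ} {T : ℝ}
  {L : Ω → ℝ → Rvec d}

set_option linter.unusedSectionVars false

lemma sect_meas (hT : 0 < T) (hc : μ.IsComplete) (hL : ∀ s, Measurable fun ω => L ω s)
    {u : ℝ → Ω → Rvec k} (hu : u ∈ Ucap μ k T L n) (ω : Ω) :
    Measurable fun s => ub T u (s, ω) :=
  (ub_meas hT hc hL hu.1).comp measurable_prodMk_right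

lemma sect_integrable (hT : 0 < T) (hc : μ.IsComplete) (hL : ∀ s, Measurable fun ω => L ω s)
    {u : ℝ → Ω → Rvec k} (hu : u ∈ Ucap μ k T L n) (ω : Ω) {t : ℝ} (ht : t ≤ T) :
    IntegrableOn (fun s => u s ω) (Ioc (0:ℝ) t) volume := by
  have hmeas : AEStronglyMeasurable (fun s => u s ω) (volume.restrict (Ioc (0:ℝ) t)) := by
    refine ((sect_meas hT hc hL hu ω).aestronglyMeasurable).congr ?_
    filter_upwards [ae_restrict_mem measurableSet_Ioc] with s hs
    exact ub_eq ⟨hs.1.le, hs.2.trans ht⟩ ω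
  refine Integrable.mono' (g := fun _ => (n * Real.sqrt k : ℝ))
    (integrable_const _) hmeas ?_
  exact Eventually.of_forall fun s => norm_le_of_Icc fun i => hu.2 s ω i

lemma acap_apply (hT : 0 < T) (hc : μ.IsComplete) (hL : ∀ s, Measurable fun ω => L ω s)
    {u : ℝ → Ω → Rvec k} (hu : u ∈ Ucap μ k T L n) (ω : Ω) {t : ℝ} (ht : t ≤ T) (i : Fin k) :
    Acap u t ω i = ∫ s in Ioc (0:ℝ) t, u s ω i := by
  have := (EuclideanSpace.proj i : Rvec k →L[ℝ] ℝ).integral_comp_comm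
    (sect_integrable hT hc hL hu ω ht)
  simpa [Acap] using this.symm

lemma acap_mem_orthant (hT : 0 < T) (hc : μ.IsComplete)
    (hL : ∀ s, Measurable fun ω => L ω s)
    {u : ℝ → Ω → Rvec k} (hu : u ∈ Ucap μ k T L n) (ω : Ω) {t : ℝ} (ht : t ≤ T) :
    Acap u t ω ∈ orthant k := by
  intro i
  rw [acap_apply hT hc hL hu ω ht i]
  exact integral_nonneg fun s => (hu.2 s ω i).1

/-- jointly measurable version of `Acap` on `[0,T]` -/
def ab {Ω : Type*} {k : ℕ} (T : ℝ) (u : ℝ → Ω → Rvec k) : ℝ × Ω → Rvec k :=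
  fun p => WithLp.toLp 2 (fun i =>
    (∫⁻ s, (if s ∈ Ioc (0:ℝ) (min p.1 T) then ENNReal.ofReal (ub T u (s, p.2) i) else 0)).toReal)

lemma ab_meas (hT : 0 < T) (hc : μ.IsComplete) (hL : ∀ s, Measurable fun ω => L ω s)
    {u : ℝ → Ω → Rvec k} (hu : u ∈ Ucap μ k T L n) :
    Measurable (ab T u) := by
  refine (WithLp.measurable_toLp 2 _).comp (measurable_pi_lambda _ fun i => ?_)
  refine Measurable.ennreal_toReal ?_
  have hjoint : Measurable fun q : (ℝ × Ω) × ℝ =>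
      (if q.2 ∈ Ioc (0:ℝ) (min q.1.1 T) then ENNReal.ofReal (ub T u (q.2, q.1.2) i) else 0) := by
    have hset : MeasurableSet {q : (ℝ × Ω) × ℝ | q.2 ∈ Ioc (0:ℝ) (min q.1.1 T)} := by
      have h1 : MeasurableSet {q : (ℝ × Ω) × ℝ | 0 < q.2} :=
        measurableSet_lt measurable_const measurable_snd
      have h2 : MeasurableSet {q : (ℝ × Ω) × ℝ | q.2 ≤ min q.1.1 T} :=
        measurableSet_le measurable_snd ((measurable_fst.fst).min measurable_const)
      exact (h1.inter h2 : _)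
    have hval : Measurable fun q : (ℝ × Ω) × ℝ => ENNReal.ofReal (ub T u (q.2, q.1.2) i) := by
      refine ENNReal.measurable_ofReal.comp ?_
      exact (measurable_pi_apply i).comp ((WithLp.measurable_ofLp 2 _).comp
        ((ub_meas hT hc hL hu.1).comp (measurable_snd.prodMk measurable_fst.snd)))
    exact Measurable.ite hset hval measurable_const
  exact hjoint.lintegral_prod_right'

lemma ab_eq (hT : 0 < T) (hc : μ.IsComplete) (hL : ∀ s, Measurable fun ω => L ω s)
    {u : ℝ → Ω → Rvec k} (hu : u ∈ Ucap μ k T L n) (ω : Ω) {t : ℝ} (ht : t ≤ T) :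
    ab T u (t, ω) = Acap u t ω := by
  refine PiLp.ext fun i => ?_
  have hmin : min t T = t := min_eq_left ht
  have hlin : (∫⁻ s, (if s ∈ Ioc (0:ℝ) (min t T) then ENNReal.ofReal (ub T u (s, ω) i) else 0))
      = ∫⁻ s in Ioc (0:ℝ) t, ENNReal.ofReal (u s ω i) := by
    rw [hmin]
    rw [← lintegral_indicator measurableSet_Ioc]
    refine lintegral_congr fun s => ?_
    rw [Set.indicator_apply]
    by_cases hs : s ∈ Ioc (0:ℝ) t
    · simp only [hs, if_true, ub_eq ⟨hs.1.le, hs.2.trans ht⟩ ω]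
    · simp [hs]
  show (∫⁻ s, _).toReal = _
  rw [hlin, acap_apply hT hc hL hu ω ht i]
  rw [integral_eq_lintegral_of_nonneg_ae]
  · exact Eventually.of_forall fun s => (hu.2 s ω i).1
  · refine (((measurable_pi_apply i).comp ((WithLp.measurable_ofLp 2 _).comp
      (sect_meas hT hc hL hu ω))).aestronglyMeasurable).congr ?_
    filter_upwards [ae_restrict_mem measurableSet_Ioc] with s hs
    show ub T u (s, ω) i = u s ω i
    rw [ub_eq ⟨hs.1.le, hs.2.trans ht⟩ ω]

end Meas
end MFProof

namespace MFProof
section Meas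

variable {Ω : Type*} [mΩ : MeasurableSpace Ω] {μ : Measure Ω} {d k n : ℕ} {T : ℝ}
  {L : Ω → ℝ → Rvec d}

set_option linter.unusedSectionVars false

lemma exists_Lbar (hT : 0 < T) (hL : ∀ s, Measurable fun ω => L ω s)
    (hcad : ∀ ω, CadlagOn T (L ω)) :
    ∃ Lb : ℝ × Ω → Rvec d, Measurable Lb ∧ ∀ (ω : Ω), ∀ t ∈ Icc (0:ℝ) T, Lb (t, ω) = L ω t := by
  classical
  have harith : ∀ s ∈ Icc (0:ℝ) T, ∀ m : ℕ,
      s ≤ min T ((⌈s / T * 2 ^ m⌉₊ : ℝ) * T / 2 ^ m) ∧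
      min T ((⌈s / T * 2 ^ m⌉₊ : ℝ) * T / 2 ^ m) ≤ s + T / 2 ^ m := by
    intro s hs m
    have h2 : (0:ℝ) < 2 ^ m := by positivity
    have h1 : s / T * 2 ^ m ≤ (⌈s / T * 2 ^ m⌉₊ : ℝ) := Nat.le_ceil _
    have hup : (⌈s / T * 2 ^ m⌉₊ : ℝ) < s / T * 2 ^ m + 1 :=
      Nat.ceil_lt_add_one (mul_nonneg (div_nonneg hs.1 hT.le) h2.le)
    have hkey : s / T * 2 ^ m * (T / 2 ^ m) = s := by field_simp
    constructor
    · refine le_min hs.2 ?_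
      calc s = s / T * 2 ^ m * (T / 2 ^ m) := hkey.symm
        _ ≤ (⌈s / T * 2 ^ m⌉₊ : ℝ) * (T / 2 ^ m) :=
            mul_le_mul_of_nonneg_right h1 (by positivity)
        _ = (⌈s / T * 2 ^ m⌉₊ : ℝ) * T / 2 ^ m := by ring
    · refine (min_le_right _ _).trans ?_
      calc (⌈s / T * 2 ^ m⌉₊ : ℝ) * T / 2 ^ m
          = (⌈s / T * 2 ^ m⌉₊ : ℝ) * (T / 2 ^ m) := by ring
        _ ≤ (s / T * 2 ^ m + 1) * (T / 2 ^ m) :=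
            mul_le_mul_of_nonneg_right hup.le (by positivity)
        _ = s + T / 2 ^ m := by rw [add_mul, hkey, one_mul]
  set θ : ℕ → ℝ → ℝ := fun m t => min T ((⌈cl T t / T * 2 ^ m⌉₊ : ℝ) * T / 2 ^ m) with hθ
  have hθ_meas : ∀ m, Measurable fun p : ℝ × Ω => L p.2 (θ m p.1) := by
    intro m
    have hG : Measurable fun q : Ω × ℕ => L q.1 (min T ((q.2 : ℝ) * T / 2 ^ m)) := by
      refine measurable_from_prod_countable_left fun j => ?_
      simpa using hL (min T ((j : ℝ) * T / 2 ^ m))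
    have hceil : Measurable fun p : ℝ × Ω => (⌈cl T p.1 / T * 2 ^ m⌉₊, p.2) := by
      refine Measurable.prodMk ?_ measurable_snd
      exact Nat.measurable_ceil.comp
        ((((continuous_cl.measurable).comp measurable_fst).div_const T).mul_const _)
    exact (hG.comp measurable_swap).comp hceil
  have hconv : ∀ p : ℝ × Ω,
      Tendsto (fun m => L p.2 (θ m p.1)) atTop (𝓝 (L p.2 (cl T p.1))) := by
    rintro ⟨t, ω⟩
    have hsmem : cl T t ∈ Icc (0:ℝ) T := cl_mem hT.le t
    have hge : ∀ m, cl T t ≤ θ m t := fun m => (harith _ hsmem m).1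
    have hle : ∀ m, θ m t ≤ cl T t + T / 2 ^ m := fun m => (harith _ hsmem m).2
    have htendsto : Tendsto (fun m : ℕ => θ m t) atTop (𝓝 (cl T t)) := by
      have hzero : Tendsto (fun m : ℕ => T / 2 ^ m) atTop (𝓝 0) := by
        simpa using tendsto_const_nhds.div_atTop
          (tendsto_pow_atTop_atTop_of_one_lt (by norm_num : (1:ℝ) < 2))
      have hup : Tendsto (fun m : ℕ => cl T t + T / 2 ^ m) atTop (𝓝 (cl T t)) := by
        simpa using tendsto_const_nhds.add hzero
      exact tendsto_of_tendsto_of_tendsto_of_le_of_le tendsto_const_nhds hup hge hle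
    rcases eq_or_lt_of_le hsmem.2 with hsT | hsT
    · have heq : ∀ m, θ m t = cl T t := fun m =>
        le_antisymm ((min_le_left _ _).trans_eq hsT.symm) (hge m)
      simp only [heq]
      exact tendsto_const_nhds
    · have hcw : ContinuousWithinAt (L ω) (Ici (cl T t)) (cl T t) :=
        (hcad ω).1 _ ⟨hsmem.1, hsT⟩
      refine hcw.tendsto.comp ?_
      rw [tendsto_nhdsWithin_iff]
      exact ⟨htendsto, Eventually.of_forall fun m => hge m⟩
  refine ⟨fun p => L p.2 (cl T p.1), ?_, fun ω t ht => ?_⟩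
  · exact measurable_of_tendsto_metrizable hθ_meas (tendsto_pi_nhds.mpr hconv)
  · show L ω (cl T t) = L ω t
    rw [cl_eq ht]

end Meas
end MFProof

namespace MFProof
section Cost

variable {Ω : Type*} [mΩ : MeasurableSpace Ω] {μ : Measure Ω} {d k n : ℕ} {T : ℝ}
  {L : Ω → ℝ → Rvec d} {f : ℝ → Rvec k} {h g : Rvec d → Rvec k → ℝ}
  {Lb : ℝ × Ω → Rvec d} {u : ℝ → Ω → Rvec k}

set_option linter.unusedSectionVars false

/-- running cost of the control -/
def aF (T : ℝ) (f : ℝ → Rvec k) (u : ℝ → Ω → Rvec k) : Ω → ℝ≥0∞ :=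
  fun ω => ENNReal.ofReal (∫ t in Ioc (0:ℝ) T, ⟪f t, u t ω⟫)

def bF (T : ℝ) (L : Ω → ℝ → Rvec d) (h : Rvec d → Rvec k → ℝ) (u : ℝ → Ω → Rvec k) :
    Ω → ℝ≥0∞ :=
  fun ω => ∫⁻ t in Ioc (0:ℝ) T, ENNReal.ofReal (h (L ω t) (Acap u t ω))

def cF (T : ℝ) (L : Ω → ℝ → Rvec d) (g : Rvec d → Rvec k → ℝ) (u : ℝ → Ω → Rvec k) :
    Ω → ℝ≥0∞ :=
  fun ω => ENNReal.ofReal (g (L ω T) (Acap u T ω))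

lemma capCost_eq' :
    capCost μ T L f h g u = ∫⁻ ω, (aF T f u ω + bF T L h u ω + cF T L g u ω) ∂μ := rfl

lemma meas_aF (hT : 0 < T) (hc : μ.IsComplete) (hL : ∀ s, Measurable fun ω => L ω s)
    (hf_cont : ContinuousOn f (Icc 0 T)) (hu : u ∈ Ucap μ k T L n) :
    Measurable (aF T f u) := by
  have hfb : Continuous fun t => f (cl T t) :=
    hf_cont.comp_continuous continuous_cl fun x => cl_mem hT.le x
  have hF : Measurable fun q : Ω × ℝ => ⟪f (cl T q.2), ub T u (q.2, q.1)⟫ := by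
    refine Measurable.inner ?_ ?_
    · exact hfb.measurable.comp measurable_snd
    · exact (ub_meas hT hc hL hu.1).comp (measurable_snd.prodMk measurable_fst)
  have hSM : StronglyMeasurable fun ω =>
      ∫ t in Ioc (0:ℝ) T, ⟪f (cl T t), ub T u (t, ω)⟫ :=
    hF.stronglyMeasurable.integral_prod_right'
  have hfun : aF T f u = fun ω =>
      ENNReal.ofReal (∫ t in Ioc (0:ℝ) T, ⟪f (cl T t), ub T u (t, ω)⟫) := by
    funext ω
    unfold aF
    congr 1
    refine setIntegral_congr_fun measurableSet_Ioc fun t ht => ?_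
    have htI : t ∈ Icc (0:ℝ) T := ⟨ht.1.le, ht.2⟩
    rw [cl_eq htI, ub_eq htI]
  rw [hfun]
  exact ENNReal.measurable_ofReal.comp hSM.measurable

lemma psi_meas (hT : 0 < T) (hc : μ.IsComplete) (hL : ∀ s, Measurable fun ω => L ω s)
    (hLb : Measurable Lb) (hh_meas : Measurable (Function.uncurry h))
    (hu : u ∈ Ucap μ k T L n) :
    Measurable (fun p : ℝ × Ω => ENNReal.ofReal (h (Lb p) (ab T u p))) := by
  refine ENNReal.measurable_ofReal.comp ?_
  exact hh_meas.comp (hLb.prodMk (ab_meas hT hc hL hu))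

lemma psi_eq (hT : 0 < T) (hc : μ.IsComplete) (hL : ∀ s, Measurable fun ω => L ω s)
    (hLbeq : ∀ (ω : Ω), ∀ t ∈ Icc (0:ℝ) T, Lb (t, ω) = L ω t)
    (hu : u ∈ Ucap μ k T L n) (ω : Ω) {t : ℝ} (ht : t ∈ Icc (0:ℝ) T) :
    ENNReal.ofReal (h (Lb (t, ω)) (ab T u (t, ω)))
      = ENNReal.ofReal (h (L ω t) (Acap u t ω)) := by
  rw [hLbeq ω t ht, ab_eq hT hc hL hu ω ht.2]

lemma bF_eq (hT : 0 < T) (hc : μ.IsComplete) (hL : ∀ s, Measurable fun ω => L ω s)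
    (hLbeq : ∀ (ω : Ω), ∀ t ∈ Icc (0:ℝ) T, Lb (t, ω) = L ω t)
    (hu : u ∈ Ucap μ k T L n) (ω : Ω) :
    bF T L h u ω = ∫⁻ t in Ioc (0:ℝ) T, ENNReal.ofReal (h (Lb (t, ω)) (ab T u (t, ω))) := by
  refine (setLIntegral_congr_fun measurableSet_Ioc ?_).symm
  exact fun t ht => psi_eq hT hc hL hLbeq hu ω ⟨ht.1.le, ht.2⟩

lemma meas_bF (hT : 0 < T) (hc : μ.IsComplete) (hL : ∀ s, Measurable fun ω => L ω s)
    (hLb : Measurable Lb) (hLbeq : ∀ (ω : Ω), ∀ t ∈ Icc (0:ℝ) T, Lb (t, ω) = L ω t)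
    (hh_meas : Measurable (Function.uncurry h)) (hu : u ∈ Ucap μ k T L n) :
    Measurable (bF T L h u) := by
  have hψ := psi_meas hT hc hL hLb hh_meas hu
  have hfun : bF T L h u = fun ω =>
      ∫⁻ t in Ioc (0:ℝ) T, ENNReal.ofReal (h (Lb (t, ω)) (ab T u (t, ω))) :=
    funext fun ω => bF_eq hT hc hL hLbeq hu ω
  rw [hfun]
  exact Measurable.lintegral_prod_right' (hψ.comp measurable_swap)

lemma cF_eq (hT : 0 < T) (hc : μ.IsComplete) (hL : ∀ s, Measurable fun ω => L ω s)
    (hLbeq : ∀ (ω : Ω), ∀ t ∈ Icc (0:ℝ) T, Lb (t, ω) = L ω t)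
    (hu : u ∈ Ucap μ k T L n) (ω : Ω) :
    cF T L g u ω = ENNReal.ofReal (g (Lb (T, ω)) (ab T u (T, ω))) :=
  (psi_eq hT hc hL hLbeq hu ω ⟨hT.le, le_rfl⟩ (h := g)).symm

lemma meas_cF (hT : 0 < T) (hc : μ.IsComplete) (hL : ∀ s, Measurable fun ω => L ω s)
    (hLb : Measurable Lb) (hLbeq : ∀ (ω : Ω), ∀ t ∈ Icc (0:ℝ) T, Lb (t, ω) = L ω t)
    (hg_meas : Measurable (Function.uncurry g)) (hu : u ∈ Ucap μ k T L n) :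
    Measurable (cF T L g u) := by
  have hψ := psi_meas hT hc hL hLb hg_meas hu
  have hfun : cF T L g u = fun ω =>
      ENNReal.ofReal (g (Lb (T, ω)) (ab T u (T, ω))) :=
    funext fun ω => cF_eq hT hc hL hLbeq hu ω
  rw [hfun]
  exact hψ.comp measurable_prodMk_left

lemma meas_F (hT : 0 < T) (hc : μ.IsComplete) (hL : ∀ s, Measurable fun ω => L ω s)
    (hLb : Measurable Lb) (hLbeq : ∀ (ω : Ω), ∀ t ∈ Icc (0:ℝ) T, Lb (t, ω) = L ω t)
    (hf_cont : ContinuousOn f (Icc 0 T)) (hh_meas : Measurable (Function.uncurry h))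
    (hg_meas : Measurable (Function.uncurry g)) (hu : u ∈ Ucap μ k T L n) :
    Measurable (fun ω => aF T f u ω + bF T L h u ω + cF T L g u ω) :=
  ((meas_aF hT hc hL hf_cont hu).add
    (meas_bF hT hc hL hLb hLbeq hh_meas hu)).add
    (meas_cF hT hc hL hLb hLbeq hg_meas hu)

lemma capCost_decomp (hT : 0 < T) (hc : μ.IsComplete) (hL : ∀ s, Measurable fun ω => L ω s)
    (hLb : Measurable Lb) (hLbeq : ∀ (ω : Ω), ∀ t ∈ Icc (0:ℝ) T, Lb (t, ω) = L ω t)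
    (hf_cont : ContinuousOn f (Icc 0 T)) (hh_meas : Measurable (Function.uncurry h))
    (hg_meas : Measurable (Function.uncurry g)) (hu : u ∈ Ucap μ k T L n) :
    capCost μ T L f h g u
      = ∫⁻ ω, aF T f u ω ∂μ + ∫⁻ ω, bF T L h u ω ∂μ + ∫⁻ ω, cF T L g u ω ∂μ := by
  rw [capCost_eq']
  rw [lintegral_add_left (f := fun ω => aF T f u ω + bF T L h u ω) ((meas_aF hT hc hL hf_cont hu).add
    (meas_bF hT hc hL hLb hLbeq hh_meas hu))]
  rw [lintegral_add_left (meas_aF hT hc hL hf_cont hu)]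

end Cost
end MFProof

namespace MFProof
section Cost2

variable {Ω : Type*} [mΩ : MeasurableSpace Ω] {μ : Measure Ω} {d k n : ℕ} {T : ℝ}
  {L : Ω → ℝ → Rvec d} {f : ℝ → Rvec k} {h g : Rvec d → Rvec k → ℝ}
  {Lb : ℝ × Ω → Rvec d}

set_option linter.unusedSectionVars false

lemma ae_swap [IsFiniteMeasure μ] {P : ℝ × Ω → Prop}
    (hP : ∀ᵐ z ∂((volume.restrict (Ioc (0:ℝ) T)).prod μ), P z) :
    ∀ᵐ ω ∂μ, ∀ᵐ t ∂(volume.restrict (Ioc (0:ℝ) T)), P (t, ω) := by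
  set ρ := volume.restrict (Ioc (0:ℝ) T) with hρ
  obtain ⟨N, hsub, hNm, hN0⟩ := exists_measurable_superset_of_null (ae_iff.mp hP)
  have hswap : (μ.prod ρ) (Prod.swap ⁻¹' N) = 0 := by
    rw [← Measure.map_apply measurable_swap hNm, Measure.prod_swap]
    exact hN0
  have h2 : ∀ᵐ z ∂(μ.prod ρ), (z.2, z.1) ∉ N := by
    rw [ae_iff]
    have hset : {z : Ω × ℝ | ¬ (z.2, z.1) ∉ N} = Prod.swap ⁻¹' N := by
      ext z; simp [Prod.swap]
    rw [hset]
    exact hswap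
  have h3 := Measure.ae_ae_of_ae_prod h2
  filter_upwards [h3] with ω hω
  filter_upwards [hω] with t ht
  by_contra hcon
  exact ht (hsub hcon)

lemma capCost_congr_ae [IsFiniteMeasure μ] {u v : ℝ → Ω → Rvec k}
    (hae : ∀ᵐ z ∂((volume.restrict (Ioc (0:ℝ) T)).prod μ), u z.1 z.2 = v z.1 z.2) :
    capCost μ T L f h g u = capCost μ T L f h g v := by
  have h1 := ae_swap hae
  refine lintegral_congr_ae ?_
  filter_upwards [h1] with ω hω
  have hAcap : ∀ t, t ≤ T → Acap u t ω = Acap v t ω := by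
    intro t ht
    refine integral_congr_ae ?_
    exact ae_restrict_of_ae_restrict_of_subset (Ioc_subset_Ioc_right ht) hω
  have e1 : (∫ t in Ioc (0:ℝ) T, ⟪f t, u t ω⟫) = ∫ t in Ioc (0:ℝ) T, ⟪f t, v t ω⟫ :=
    integral_congr_ae (hω.mono fun t htv => by simp only [htv])
  have e2 : (∫⁻ t in Ioc (0:ℝ) T, ENNReal.ofReal (h (L ω t) (Acap u t ω)))
      = ∫⁻ t in Ioc (0:ℝ) T, ENNReal.ofReal (h (L ω t) (Acap v t ω)) :=
    setLIntegral_congr_fun measurableSet_Ioc (fun t ht => by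
      rw [hAcap t ht.2])
  rw [e1, e2, hAcap T le_rfl]

lemma liminf_add_liminf_le {x y : ℕ → ℝ≥0∞} :
    liminf x atTop + liminf y atTop ≤ liminf (fun j => x j + y j) atTop := by
  rw [liminf_eq_iSup_iInf_of_nat, liminf_eq_iSup_iInf_of_nat, liminf_eq_iSup_iInf_of_nat]
  have hm : ∀ z : ℕ → ℝ≥0∞, Monotone fun m => ⨅ i ≥ m, z i := fun z a b hab =>
    le_iInf₂ fun i hi => iInf₂_le i (hab.trans hi)
  rw [ENNReal.iSup_add_iSup_of_monotone (hm x) (hm y)]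
  exact iSup_mono fun m => le_iInf₂ fun i hi => add_le_add (iInf₂_le i hi) (iInf₂_le i hi)

lemma capCost_lsc [IsFiniteMeasure μ] (hT : 0 < T) (hc : μ.IsComplete)
    (hL : ∀ s, Measurable fun ω => L ω s)
    (hLb : Measurable Lb) (hLbeq : ∀ (ω : Ω), ∀ t ∈ Icc (0:ℝ) T, Lb (t, ω) = L ω t)
    (hf_cont : ContinuousOn f (Icc 0 T))
    (hh_meas : Measurable (Function.uncurry h)) (hg_meas : Measurable (Function.uncurry g))
    (hh_cwa : ∀ l, ∀ a ∈ orthant k, ContinuousWithinAt (h l) (orthant k) a)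
    (hg_cwa : ∀ l, ∀ a ∈ orthant k, ContinuousWithinAt (g l) (orthant k) a)
    {us : ℕ → ℝ → Ω → Rvec k} (hus : ∀ j, us j ∈ Ucap μ k T L n)
    {v : ℝ → Ω → Rvec k} (hv : v ∈ Ucap μ k T L n)
    (hconv : ∀ᵐ ω ∂μ, ∀ᵐ t ∂(volume.restrict (Ioc (0:ℝ) T)),
      Tendsto (fun j => us j t ω) atTop (𝓝 (v t ω))) :
    capCost μ T L f h g v ≤ liminf (fun j => capCost μ T L f h g (us j)) atTop := by
  obtain ⟨Bf, hBf⟩ := isCompact_Icc.exists_bound_of_continuousOn hf_cont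
  have hsm : ∀ w, w ∈ Ucap μ k T L n → ∀ ω : Ω, AEStronglyMeasurable
      (fun t => ⟪f t, w t ω⟫) (volume.restrict (Ioc (0:ℝ) T)) := by
    intro w hw ω
    have hfb : Continuous fun t => f (cl T t) :=
      hf_cont.comp_continuous continuous_cl fun x => cl_mem hT.le x
    have hms : Measurable fun t => ⟪f (cl T t), ub T w (t, ω)⟫ :=
      Measurable.inner hfb.measurable (sect_meas hT hc hL hw ω)
    refine hms.aestronglyMeasurable.congr ?_
    filter_upwards [ae_restrict_mem measurableSet_Ioc] with t ht
    have htI : t ∈ Icc (0:ℝ) T := ⟨ht.1.le, ht.2⟩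
    rw [cl_eq htI, ub_eq htI]
  -- pointwise statements
  have hAcapT : ∀ᵐ ω ∂μ, ∀ t, t ≤ T →
      Tendsto (fun j => Acap (us j) t ω) atTop (𝓝 (Acap v t ω)) := by
    filter_upwards [hconv] with ω hω
    intro t ht
    refine tendsto_integral_of_dominated_convergence (fun _ => (n * Real.sqrt k : ℝ))
      (fun j => (sect_integrable hT hc hL (hus j) ω ht).aestronglyMeasurable)
      (integrable_const _) ?_ ?_
    · intro j
      exact Eventually.of_forall fun s => norm_le_of_Icc fun i => (hus j).2 s ω i
    · exact ae_restrict_of_ae_restrict_of_subset (Ioc_subset_Ioc_right ht) hω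
  have hA : ∀ᵐ ω ∂μ, aF T f v ω ≤ liminf (fun j => aF T f (us j) ω) atTop := by
    filter_upwards [hconv] with ω hω
    have htend : Tendsto (fun j => ∫ t in Ioc (0:ℝ) T, ⟪f t, us j t ω⟫) atTop
        (𝓝 (∫ t in Ioc (0:ℝ) T, ⟪f t, v t ω⟫)) := by
      refine tendsto_integral_of_dominated_convergence
        (fun _ => Bf * (n * Real.sqrt k : ℝ)) (fun j => hsm _ (hus j) ω)
        (integrable_const _) ?_ ?_
      · intro j
        filter_upwards [ae_restrict_mem measurableSet_Ioc] with t ht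
        rw [Real.norm_eq_abs]
        exact abs_inner_le (hBf t ⟨ht.1.le, ht.2⟩) (fun i => (hus j).2 t ω i)
      · filter_upwards [hω] with t htv
        exact tendsto_const_nhds.inner htv
    have := (ENNReal.continuous_ofReal.tendsto _).comp htend
    exact le_of_eq this.liminf_eq.symm
  have hC : ∀ᵐ ω ∂μ, cF T L g v ω ≤ liminf (fun j => cF T L g (us j) ω) atTop := by
    filter_upwards [hAcapT] with ω hω
    have horth : ∀ j, Acap (us j) T ω ∈ orthant k := fun j =>
      acap_mem_orthant hT hc hL (hus j) ω le_rfl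
    have hcwa := hg_cwa (L ω T) _ (acap_mem_orthant hT hc hL hv ω le_rfl)
    have htend : Tendsto (fun j => g (L ω T) (Acap (us j) T ω)) atTop
        (𝓝 (g (L ω T) (Acap v T ω))) :=
      hcwa.tendsto.comp (tendsto_nhdsWithin_iff.mpr ⟨hω T le_rfl, Eventually.of_forall horth⟩)
    have := (ENNReal.continuous_ofReal.tendsto _).comp htend
    exact le_of_eq this.liminf_eq.symm
  have hB : ∀ᵐ ω ∂μ, bF T L h v ω ≤ liminf (fun j => bF T L h (us j) ω) atTop := by
    filter_upwards [hAcapT] with ω hω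
    have hm : ∀ j, Measurable fun t =>
        ENNReal.ofReal (h (Lb (t, ω)) (ab T (us j) (t, ω))) := fun j =>
      (psi_meas hT hc hL hLb hh_meas (hus j)).comp measurable_prodMk_right
    have h1 : bF T L h v ω = ∫⁻ t in Ioc (0:ℝ) T,
        liminf (fun j => ENNReal.ofReal (h (Lb (t, ω)) (ab T (us j) (t, ω)))) atTop := by
      refine setLIntegral_congr_fun measurableSet_Ioc (fun t ht => ?_)
      have horth : ∀ j, Acap (us j) t ω ∈ orthant k := fun j =>
        acap_mem_orthant hT hc hL (hus j) ω ht.2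
      have hcwa := hh_cwa (L ω t) _ (acap_mem_orthant hT hc hL hv ω ht.2)
      have htend : Tendsto (fun j => h (L ω t) (Acap (us j) t ω)) atTop
          (𝓝 (h (L ω t) (Acap v t ω))) :=
        hcwa.tendsto.comp
          (tendsto_nhdsWithin_iff.mpr ⟨hω t ht.2, Eventually.of_forall horth⟩)
      have htend2 := (ENNReal.continuous_ofReal.tendsto _).comp htend
      have heq : (fun j => ENNReal.ofReal (h (Lb (t, ω)) (ab T (us j) (t, ω))))
          = fun j => ENNReal.ofReal (h (L ω t) (Acap (us j) t ω)) :=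
        funext fun j => psi_eq hT hc hL hLbeq (hus j) ω ⟨ht.1.le, ht.2⟩
      rw [heq]
      exact htend2.liminf_eq.symm
    rw [h1]
    refine le_trans (lintegral_liminf_le hm) ?_
    have h2 : (fun j => ∫⁻ t in Ioc (0:ℝ) T,
        ENNReal.ofReal (h (Lb (t, ω)) (ab T (us j) (t, ω)))) = fun j => bF T L h (us j) ω :=
      funext fun j => (bF_eq hT hc hL hLbeq (hus j) ω).symm
    rw [h2]
  -- assemble
  have hdecomp : ∀ j, capCost μ T L f h g (us j)
      = ∫⁻ ω, aF T f (us j) ω ∂μ + ∫⁻ ω, bF T L h (us j) ω ∂μ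
        + ∫⁻ ω, cF T L g (us j) ω ∂μ := fun j =>
    capCost_decomp hT hc hL hLb hLbeq hf_cont hh_meas hg_meas (hus j)
  rw [capCost_decomp hT hc hL hLb hLbeq hf_cont hh_meas hg_meas hv,
    funext hdecomp]
  have sA : ∫⁻ ω, aF T f v ω ∂μ ≤ liminf (fun j => ∫⁻ ω, aF T f (us j) ω ∂μ) atTop := by
    refine le_trans (lintegral_mono_ae hA) ?_
    exact lintegral_liminf_le fun j => meas_aF hT hc hL hf_cont (hus j)
  have sB : ∫⁻ ω, bF T L h v ω ∂μ ≤ liminf (fun j => ∫⁻ ω, bF T L h (us j) ω ∂μ) atTop := by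
    refine le_trans (lintegral_mono_ae hB) ?_
    exact lintegral_liminf_le fun j => meas_bF hT hc hL hLb hLbeq hh_meas (hus j)
  have sC : ∫⁻ ω, cF T L g v ω ∂μ ≤ liminf (fun j => ∫⁻ ω, cF T L g (us j) ω ∂μ) atTop := by
    refine le_trans (lintegral_mono_ae hC) ?_
    exact lintegral_liminf_le fun j => meas_cF hT hc hL hLb hLbeq hg_meas (hus j)
  calc ∫⁻ ω, aF T f v ω ∂μ + ∫⁻ ω, bF T L h v ω ∂μ + ∫⁻ ω, cF T L g v ω ∂μ
      ≤ liminf (fun j => ∫⁻ ω, aF T f (us j) ω ∂μ) atTop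
        + liminf (fun j => ∫⁻ ω, bF T L h (us j) ω ∂μ) atTop
        + liminf (fun j => ∫⁻ ω, cF T L g (us j) ω ∂μ) atTop :=
        add_le_add (add_le_add sA sB) sC
    _ ≤ liminf (fun j => ∫⁻ ω, aF T f (us j) ω ∂μ + ∫⁻ ω, bF T L h (us j) ω ∂μ) atTop
        + liminf (fun j => ∫⁻ ω, cF T L g (us j) ω ∂μ) atTop :=
        add_le_add liminf_add_liminf_le le_rfl
    _ ≤ liminf (fun j => ∫⁻ ω, aF T f (us j) ω ∂μ + ∫⁻ ω, bF T L h (us j) ω ∂μ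
        + ∫⁻ ω, cF T L g (us j) ω ∂μ) atTop := liminf_add_liminf_le

end Cost2
end MFProof

namespace MFProof
section UcapFacts

variable {Ω : Type*} [mΩ : MeasurableSpace Ω] {μ : Measure Ω} {d k n : ℕ} {T : ℝ}
  {L : Ω → ℝ → Rvec d}

set_option linter.unusedSectionVars false

lemma zero_mem_Ucap : (fun (_ : ℝ) (_ : Ω) => (0 : Rvec k)) ∈ Ucap μ k T L n := by
  constructor
  · intro t _
    exact measurable_const
  · intro t ω i
    constructor
    · simp
    · simp

lemma combo_mem_Ucap {u v : ℝ → Ω → Rvec k} (hu : u ∈ Ucap μ k T L n)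
    (hv : v ∈ Ucap μ k T L n) {a b : ℝ} (ha : 0 ≤ a) (hb : 0 ≤ b) (hab : a + b = 1) :
    (fun t ω => a • u t ω + b • v t ω) ∈ Ucap μ k T L n := by
  constructor
  · intro t ht
    exact ((hu.1 t ht).const_smul a).add ((hv.1 t ht).const_smul b)
  · intro t ω i
    show (a • u t ω + b • v t ω) i ∈ Icc (0:ℝ) (n:ℝ)
    have h1 := hu.2 t ω i
    have h2 := hv.2 t ω i
    have happ : (a • u t ω + b • v t ω) i = a * u t ω i + b * v t ω i := by
      simp [PiLp.add_apply, PiLp.smul_apply, smul_eq_mul]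
    rw [happ]
    constructor
    · nlinarith [h1.1, h2.1]
    · nlinarith [h1.1, h1.2, h2.1, h2.2]

lemma meas_pi' {α : Type*} {m : MeasurableSpace α} {k : ℕ} {f : α → Rvec k}
    (hf : ∀ i, @Measurable α ℝ m _ fun a => f a i) : @Measurable α (Rvec k) m _ f := by
  letI := m
  exact (WithLp.measurable_toLp 2 _).comp (measurable_pi_lambda (fun a => (f a).ofLp) hf)

lemma limit_mem_Ucap {us : ℕ → ℝ → Ω → Rvec k} (hus : ∀ j, us j ∈ Ucap μ k T L n) :
    ∃ w ∈ Ucap μ k T L n, ∀ (t : ℝ) (ω : Ω) (x : Rvec k),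
      Tendsto (fun j => us j t ω) atTop (𝓝 x) → w t ω = x := by
  classical
  refine ⟨fun t ω => WithLp.toLp 2 (fun i => max 0 (min (n : ℝ)
    (limsup (fun j => us j t ω i) atTop))), ?_, ?_⟩
  · constructor
    · intro t ht
      refine meas_pi' fun i => ?_
      have hj : ∀ j, @Measurable (Icc (0:ℝ) t × Ω) ℝ
          (@Prod.instMeasurableSpace _ _ _ (sigmaBarPlus μ T L t)) _
          (fun p => us j (p.1 : ℝ) p.2 i) :=
        fun j => (measurable_pi_apply i).comp ((WithLp.measurable_ofLp 2 _).comp ((hus j).1 t ht))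
      have hlim := Measurable.limsup hj
      exact measurable_const.max (measurable_const.min hlim)
    · intro t ω i
      constructor
      · exact le_max_left _ _
      · exact max_le (Nat.cast_nonneg n) (min_le_left _ _)
  · intro t ω x hx
    refine PiLp.ext fun i => ?_
    have hxi : Tendsto (fun j => us j t ω i) atTop (𝓝 (x i)) := by
      have hc : Continuous fun y : Rvec k => y i := (EuclideanSpace.proj i (𝕜 := ℝ)).continuous
      exact (hc.tendsto x).comp hx
    have hls : limsup (fun j => us j t ω i) atTop = x i := hxi.limsup_eq
    have hx0 : (0:ℝ) ≤ x i := ge_of_tendsto' hxi fun j => ((hus j).2 t ω i).1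
    have hxn : x i ≤ (n:ℝ) := le_of_tendsto' hxi fun j => ((hus j).2 t ω i).2
    show max 0 (min (n:ℝ) (limsup (fun j => us j t ω i) atTop)) = x i
    rw [hls, min_eq_right hxn, max_eq_right hx0]

end UcapFacts
end MFProof

namespace MFProof
section Convexity

variable {Ω : Type*} [mΩ : MeasurableSpace Ω] {μ : Measure Ω} {d k n : ℕ} {T : ℝ}
  {L : Ω → ℝ → Rvec d} {f : ℝ → Rvec k} {h g : Rvec d → Rvec k → ℝ}
  {Lb : ℝ × Ω → Rvec d}

set_option linter.unusedSectionVars false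

lemma inner_aesm (hT : 0 < T) (hc : μ.IsComplete) (hL : ∀ s, Measurable fun ω => L ω s)
    (hf_cont : ContinuousOn f (Icc 0 T)) {u : ℝ → Ω → Rvec k}
    (hu : u ∈ Ucap μ k T L n) (ω : Ω) :
    AEStronglyMeasurable (fun t => ⟪f t, u t ω⟫) (volume.restrict (Ioc (0:ℝ) T)) := by
  have hfb : Continuous fun t => f (cl T t) :=
    hf_cont.comp_continuous continuous_cl fun x => cl_mem hT.le x
  have hms : Measurable fun t => ⟪f (cl T t), ub T u (t, ω)⟫ :=
    Measurable.inner hfb.measurable (sect_meas hT hc hL hu ω)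
  refine hms.aestronglyMeasurable.congr ?_
  filter_upwards [ae_restrict_mem measurableSet_Ioc] with t ht
  have htI : t ∈ Icc (0:ℝ) T := ⟨ht.1.le, ht.2⟩
  rw [cl_eq htI, ub_eq htI]

lemma inner_integrable (hT : 0 < T) (hc : μ.IsComplete)
    (hL : ∀ s, Measurable fun ω => L ω s)
    (hf_cont : ContinuousOn f (Icc 0 T)) {u : ℝ → Ω → Rvec k}
    (hu : u ∈ Ucap μ k T L n) (ω : Ω) :
    IntegrableOn (fun t => ⟪f t, u t ω⟫) (Ioc (0:ℝ) T) volume := by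
  obtain ⟨Bf, hBf⟩ := isCompact_Icc.exists_bound_of_continuousOn hf_cont
  refine Integrable.mono' (g := fun _ => Bf * (n * Real.sqrt k : ℝ)) (integrable_const _)
    (inner_aesm hT hc hL hf_cont hu ω) ?_
  filter_upwards [ae_restrict_mem measurableSet_Ioc] with t ht
  rw [Real.norm_eq_abs]
  exact abs_inner_le (hBf t ⟨ht.1.le, ht.2⟩) (fun i => hu.2 t ω i)

lemma capCost_convex [IsFiniteMeasure μ] (hT : 0 < T) (hc : μ.IsComplete)
    (hL : ∀ s, Measurable fun ω => L ω s)
    (hLb : Measurable Lb) (hLbeq : ∀ (ω : Ω), ∀ t ∈ Icc (0:ℝ) T, Lb (t, ω) = L ω t)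
    (hf_cont : ContinuousOn f (Icc 0 T))
    (hf_nonneg : ∀ t ∈ Icc (0:ℝ) T, ∀ i, 0 ≤ f t i)
    (hh_meas : Measurable (Function.uncurry h)) (hg_meas : Measurable (Function.uncurry g))
    (hh_nonneg : ∀ l, ∀ a ∈ orthant k, 0 ≤ h l a)
    (hg_nonneg : ∀ l, ∀ a ∈ orthant k, 0 ≤ g l a)
    (hh_convex : ∀ l, ConvexOn ℝ (orthant k) (h l))
    (hg_convex : ∀ l, ConvexOn ℝ (orthant k) (g l))
    {u v : ℝ → Ω → Rvec k} (hu : u ∈ Ucap μ k T L n) (hv : v ∈ Ucap μ k T L n)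
    {a b : ℝ} (ha : 0 ≤ a) (hb : 0 ≤ b) (hab : a + b = 1) :
    capCost μ T L f h g (fun t ω => a • u t ω + b • v t ω)
      ≤ ENNReal.ofReal a * capCost μ T L f h g u
        + ENNReal.ofReal b * capCost μ T L f h g v := by
  set w : ℝ → Ω → Rvec k := fun t ω => a • u t ω + b • v t ω with hw_def
  have hw : w ∈ Ucap μ k T L n := combo_mem_Ucap hu hv ha hb hab
  have hAcap : ∀ (ω : Ω), ∀ t, t ≤ T → Acap w t ω = a • Acap u t ω + b • Acap v t ω := by
    intro ω t ht
    unfold Acap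
    have hiu := sect_integrable hT hc hL hu ω ht
    have hiv := sect_integrable hT hc hL hv ω ht
    have hiu' : Integrable (fun s => a • u s ω) (volume.restrict (Ioc (0:ℝ) t)) :=
      hiu.smul a
    have hiv' : Integrable (fun s => b • v s ω) (volume.restrict (Ioc (0:ℝ) t)) :=
      hiv.smul b
    show (∫ s in Ioc (0:ℝ) t, (a • u s ω + b • v s ω)) = _
    rw [integral_add hiu' hiv', integral_smul, integral_smul]
  -- a-term
  have haF : ∀ ω, aF T f w ω
      = ENNReal.ofReal a * aF T f u ω + ENNReal.ofReal b * aF T f v ω := by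
    intro ω
    unfold aF
    have hiu := inner_integrable hT hc hL hf_cont hu ω
    have hiv := inner_integrable hT hc hL hf_cont hv ω
    have hinner : EqOn (fun t => ⟪f t, w t ω⟫)
        (fun t => a • ⟪f t, u t ω⟫ + b • ⟪f t, v t ω⟫) (Ioc (0:ℝ) T) := by
      intro t ht
      show ⟪f t, a • u t ω + b • v t ω⟫ = _
      rw [inner_add_right, real_inner_smul_right, real_inner_smul_right]
      simp [smul_eq_mul]
    have hiu' : Integrable (fun t => a • ⟪f t, u t ω⟫)
        (volume.restrict (Ioc (0:ℝ) T)) := hiu.smul a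
    have hiv' : Integrable (fun t => b • ⟪f t, v t ω⟫)
        (volume.restrict (Ioc (0:ℝ) T)) := hiv.smul b
    rw [setIntegral_congr_fun measurableSet_Ioc hinner,
      integral_add hiu' hiv', integral_smul, integral_smul, smul_eq_mul, smul_eq_mul]
    have hXu : 0 ≤ ∫ t in Ioc (0:ℝ) T, ⟪f t, u t ω⟫ :=
      setIntegral_nonneg measurableSet_Ioc fun t ht =>
        inner_nonneg_of_coords (fun i => hf_nonneg t ⟨ht.1.le, ht.2⟩ i)
          (fun i => (hu.2 t ω i).1)
    have hXv : 0 ≤ ∫ t in Ioc (0:ℝ) T, ⟪f t, v t ω⟫ :=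
      setIntegral_nonneg measurableSet_Ioc fun t ht =>
        inner_nonneg_of_coords (fun i => hf_nonneg t ⟨ht.1.le, ht.2⟩ i)
          (fun i => (hv.2 t ω i).1)
    rw [ENNReal.ofReal_add (mul_nonneg ha hXu) (mul_nonneg hb hXv),
      ENNReal.ofReal_mul ha, ENNReal.ofReal_mul hb]
  -- b-term
  have hbF : ∀ ω, bF T L h w ω
      ≤ ENNReal.ofReal a * bF T L h u ω + ENNReal.ofReal b * bF T L h v ω := by
    intro ω
    rw [bF_eq hT hc hL hLbeq hw ω, bF_eq hT hc hL hLbeq hu ω, bF_eq hT hc hL hLbeq hv ω]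
    have hmus : Measurable fun t : ℝ => ENNReal.ofReal (h (Lb (t, ω)) (ab T u (t, ω))) :=
      (psi_meas hT hc hL hLb hh_meas hu).comp measurable_prodMk_right
    have hmvs : Measurable fun t : ℝ => ENNReal.ofReal (h (Lb (t, ω)) (ab T v (t, ω))) :=
      (psi_meas hT hc hL hLb hh_meas hv).comp measurable_prodMk_right
    have hptw : ∀ t ∈ Ioc (0:ℝ) T,
        ENNReal.ofReal (h (Lb (t, ω)) (ab T w (t, ω)))
        ≤ ENNReal.ofReal a * ENNReal.ofReal (h (Lb (t, ω)) (ab T u (t, ω)))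
          + ENNReal.ofReal b * ENNReal.ofReal (h (Lb (t, ω)) (ab T v (t, ω))) := by
      intro t ht
      have htI : t ∈ Icc (0:ℝ) T := ⟨ht.1.le, ht.2⟩
      rw [psi_eq hT hc hL hLbeq hw ω htI, psi_eq hT hc hL hLbeq hu ω htI,
        psi_eq hT hc hL hLbeq hv ω htI]
      have hmu := acap_mem_orthant hT hc hL hu ω ht.2
      have hmv := acap_mem_orthant hT hc hL hv ω ht.2
      have hcv := (hh_convex (L ω t)).2 hmu hmv ha hb hab
      rw [hAcap ω t ht.2]
      refine le_trans (ENNReal.ofReal_le_ofReal (by simpa [smul_eq_mul] using hcv)) ?_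
      rw [ENNReal.ofReal_add (mul_nonneg ha (hh_nonneg _ _ hmu))
        (mul_nonneg hb (hh_nonneg _ _ hmv)),
        ENNReal.ofReal_mul ha, ENNReal.ofReal_mul hb]
    calc (∫⁻ t in Ioc (0:ℝ) T, ENNReal.ofReal (h (Lb (t, ω)) (ab T w (t, ω))))
        ≤ ∫⁻ t in Ioc (0:ℝ) T,
          (ENNReal.ofReal a * ENNReal.ofReal (h (Lb (t, ω)) (ab T u (t, ω)))
            + ENNReal.ofReal b * ENNReal.ofReal (h (Lb (t, ω)) (ab T v (t, ω)))) := by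
          refine lintegral_mono_ae ?_
          filter_upwards [ae_restrict_mem measurableSet_Ioc] with t ht
          exact hptw t ht
      _ = ENNReal.ofReal a * (∫⁻ t in Ioc (0:ℝ) T,
            ENNReal.ofReal (h (Lb (t, ω)) (ab T u (t, ω))))
          + ENNReal.ofReal b * (∫⁻ t in Ioc (0:ℝ) T,
            ENNReal.ofReal (h (Lb (t, ω)) (ab T v (t, ω)))) := by
          rw [lintegral_add_left (hmus.const_mul _), lintegral_const_mul _ hmus,
            lintegral_const_mul _ hmvs]
  -- c-term
  have hcF : ∀ ω, cF T L g w ω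
      ≤ ENNReal.ofReal a * cF T L g u ω + ENNReal.ofReal b * cF T L g v ω := by
    intro ω
    unfold cF
    have hmu := acap_mem_orthant hT hc hL hu ω (le_refl T)
    have hmv := acap_mem_orthant hT hc hL hv ω (le_refl T)
    have hcv := (hg_convex (L ω T)).2 hmu hmv ha hb hab
    rw [hAcap ω T le_rfl]
    refine le_trans (ENNReal.ofReal_le_ofReal (by simpa [smul_eq_mul] using hcv)) ?_
    rw [ENNReal.ofReal_add (mul_nonneg ha (hg_nonneg _ _ hmu))
      (mul_nonneg hb (hg_nonneg _ _ hmv)),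
      ENNReal.ofReal_mul ha, ENNReal.ofReal_mul hb]
  -- assemble
  rw [capCost_decomp hT hc hL hLb hLbeq hf_cont hh_meas hg_meas hw,
    capCost_decomp hT hc hL hLb hLbeq hf_cont hh_meas hg_meas hu,
    capCost_decomp hT hc hL hLb hLbeq hf_cont hh_meas hg_meas hv]
  have sA : ∫⁻ ω, aF T f w ω ∂μ
      = ENNReal.ofReal a * ∫⁻ ω, aF T f u ω ∂μ
        + ENNReal.ofReal b * ∫⁻ ω, aF T f v ω ∂μ := by
    rw [lintegral_congr haF,
      lintegral_add_left ((meas_aF hT hc hL hf_cont hu).const_mul _),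
      lintegral_const_mul _ (meas_aF hT hc hL hf_cont hu),
      lintegral_const_mul _ (meas_aF hT hc hL hf_cont hv)]
  have sB : ∫⁻ ω, bF T L h w ω ∂μ
      ≤ ENNReal.ofReal a * ∫⁻ ω, bF T L h u ω ∂μ
        + ENNReal.ofReal b * ∫⁻ ω, bF T L h v ω ∂μ := by
    refine le_trans (lintegral_mono hbF) ?_
    rw [lintegral_add_left ((meas_bF hT hc hL hLb hLbeq hh_meas hu).const_mul _),
      lintegral_const_mul _ (meas_bF hT hc hL hLb hLbeq hh_meas hu),
      lintegral_const_mul _ (meas_bF hT hc hL hLb hLbeq hh_meas hv)]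
  have sC : ∫⁻ ω, cF T L g w ω ∂μ
      ≤ ENNReal.ofReal a * ∫⁻ ω, cF T L g u ω ∂μ
        + ENNReal.ofReal b * ∫⁻ ω, cF T L g v ω ∂μ := by
    refine le_trans (lintegral_mono hcF) ?_
    rw [lintegral_add_left ((meas_cF hT hc hL hLb hLbeq hg_meas hu).const_mul _),
      lintegral_const_mul _ (meas_cF hT hc hL hLb hLbeq hg_meas hu),
      lintegral_const_mul _ (meas_cF hT hc hL hLb hLbeq hg_meas hv)]
  calc ∫⁻ ω, aF T f w ω ∂μ + ∫⁻ ω, bF T L h w ω ∂μ + ∫⁻ ω, cF T L g w ω ∂μ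
      ≤ (ENNReal.ofReal a * ∫⁻ ω, aF T f u ω ∂μ
          + ENNReal.ofReal b * ∫⁻ ω, aF T f v ω ∂μ)
        + (ENNReal.ofReal a * ∫⁻ ω, bF T L h u ω ∂μ
          + ENNReal.ofReal b * ∫⁻ ω, bF T L h v ω ∂μ)
        + (ENNReal.ofReal a * ∫⁻ ω, cF T L g u ω ∂μ
          + ENNReal.ofReal b * ∫⁻ ω, cF T L g v ω ∂μ) :=
        add_le_add (add_le_add sA.le sB) sC
    _ = ENNReal.ofReal a * (∫⁻ ω, aF T f u ω ∂μ + ∫⁻ ω, bF T L h u ω ∂μ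
          + ∫⁻ ω, cF T L g u ω ∂μ)
        + ENNReal.ofReal b * (∫⁻ ω, aF T f v ω ∂μ + ∫⁻ ω, bF T L h v ω ∂μ
          + ∫⁻ ω, cF T L g v ω ∂μ) := by ring

end Convexity
end MFProof

namespace MFProof
section L2

variable {Ω : Type*} [mΩ : MeasurableSpace Ω] {μ : Measure Ω} {d k n : ℕ} {T : ℝ}
  {L : Ω → ℝ → Rvec d}

set_option linter.unusedSectionVars false

lemma ae_fst_mem [IsFiniteMeasure μ] :
    ∀ᵐ p ∂((volume.restrict (Ioc (0:ℝ) T)).prod μ), p.1 ∈ Ioc (0:ℝ) T := by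
  rw [ae_iff]
  have hset : {p : ℝ × Ω | ¬ p.1 ∈ Ioc (0:ℝ) T} = (Ioc (0:ℝ) T)ᶜ ×ˢ (univ : Set Ω) := by
    ext p; simp
  rw [hset, Measure.prod_prod]
  have : (volume.restrict (Ioc (0:ℝ) T)) (Ioc (0:ℝ) T)ᶜ = 0 := by
    rw [Measure.restrict_apply measurableSet_Ioc.compl, compl_inter_self]
    exact measure_empty
  rw [this, zero_mul]

lemma mem_L2 [IsFiniteMeasure μ] (hT : 0 < T) (hc : μ.IsComplete)
    (hL : ∀ s, Measurable fun ω => L ω s) {u : ℝ → Ω → Rvec k}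
    (hu : u ∈ Ucap μ k T L n) :
    MemLp (fun p : ℝ × Ω => u p.1 p.2) 2 ((volume.restrict (Ioc (0:ℝ) T)).prod μ) := by
  refine MemLp.of_bound ?_ ((n : ℝ) * Real.sqrt k) ?_
  · refine (ub_meas hT hc hL hu.1).aestronglyMeasurable.congr ?_
    filter_upwards [ae_fst_mem (μ := μ)] with p hp
    exact ub_eq ⟨hp.1.le, hp.2⟩ p.2
  · exact Eventually.of_forall fun p => norm_le_of_Icc fun i => hu.2 p.1 p.2 i

end L2
end MFProof


open MFProof

set_option maxHeartbeats 2000000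
set_option synthInstance.maxHeartbeats 1000000

/-- **Existence of minimizers for the capped problems** (Proposition 3.2): under
hypothesis (3), for each `n` the infimum of `J` over the Lipschitz class `𝒰^{[n]}`
is attained. -/
theorem stmt9 (d k : ℕ) (T : ℝ) (hT : 0 < T)
    (f : ℝ → Rvec k) (h g : Rvec d → Rvec k → ℝ) (Dh Dg : Rvec d → Rvec k → Rvec k)
    {Ω : Type*} [MeasurableSpace Ω] (μ : Measure Ω)
    (hprob : IsProbabilityMeasure μ) (hcomp : μ.IsComplete)
    (L : Ω → ℝ → Rvec d)
    (hL_meas : ∀ s : ℝ, Measurable (fun ω => L ω s))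
    (hL_cadlag : ∀ ω, CadlagOn T (L ω))
    (hf_cont : ContinuousOn f (Icc 0 T))
    (hf_pos : ∃ c : ℝ, 0 < c ∧ ∀ t ∈ Icc (0:ℝ) T, ∀ i, c ≤ f t i)
    (hh_meas : Measurable (Function.uncurry h))
    (hg_meas : Measurable (Function.uncurry g))
    (hh_nonneg : ∀ l, ∀ a ∈ orthant k, 0 ≤ h l a)
    (hg_nonneg : ∀ l, ∀ a ∈ orthant k, 0 ≤ g l a)
    (hh_convex : ∀ l, ConvexOn ℝ (orthant k) (h l))
    (hg_convex : ∀ l, ConvexOn ℝ (orthant k) (g l))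
    (hh_cont_l : ∀ a ∈ orthant k, Continuous fun l => h l a)
    (hg_cont_l : ∀ a ∈ orthant k, Continuous fun l => g l a)
    (hh_diff : ∀ l, ∀ a ∈ orthant k,
      HasFDerivWithinAt (h l) ((innerSL ℝ) (Dh l a)) (orthant k) a)
    (hg_diff : ∀ l, ∀ a ∈ orthant k,
      HasFDerivWithinAt (g l) ((innerSL ℝ) (Dg l a)) (orthant k) a)
    (hh_dcont : ∀ l, ContinuousOn (Dh l) (orthant k))
    (hg_dcont : ∀ l, ContinuousOn (Dg l) (orthant k))
    (p q : ℝ) (hp : 1 < p) (hq : 1 < q) (Φh Φg : Rvec d → ℝ)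
    (hΦh_meas : Measurable Φh) (hΦg_meas : Measurable Φg)
    (hΦh_nonneg : ∀ l, 0 ≤ Φh l) (hΦg_nonneg : ∀ l, 0 ≤ Φg l)
    (hΦh_Lp : MemLp (fun z : ℝ × Ω => Φh (L z.2 z.1)) (ENNReal.ofReal p)
      ((volume.restrict (Icc (0:ℝ) T)).prod μ))
    (hΦg_Lp : MemLp (fun ω => Φg (L ω T)) (ENNReal.ofReal p) μ)
    (hh_growth : ∀ l, ∀ a ∈ orthant k, h l 0 + ‖Dh l a‖ ≤ Φh l + ‖a‖ ^ q)
    (hg_growth : ∀ l, ∀ a ∈ orthant k, g l 0 + ‖Dg l a‖ ≤ Φg l + ‖a‖ ^ q)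
    (n : ℕ) :
    ∃ u ∈ Ucap μ k T L n, ∀ v ∈ Ucap μ k T L n,
      capCost μ T L f h g u ≤ capCost μ T L f h g v := by
  classical
  haveI := hprob
  have hh_cwa : ∀ l, ∀ a ∈ orthant k, ContinuousWithinAt (h l) (orthant k) a :=
    fun l a ha => (hh_diff l a ha).continuousWithinAt
  have hg_cwa : ∀ l, ∀ a ∈ orthant k, ContinuousWithinAt (g l) (orthant k) a :=
    fun l a ha => (hg_diff l a ha).continuousWithinAt
  have hf_nonneg : ∀ t ∈ Icc (0:ℝ) T, ∀ i, 0 ≤ f t i := by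
    obtain ⟨c0, hc0, hfc⟩ := hf_pos
    exact fun t ht i => hc0.le.trans (hfc t ht i)
  obtain ⟨Lb, hLb, hLbeq⟩ := MFProof.exists_Lbar hT hL_meas hL_cadlag
  set I : ℝ≥0∞ :=
    ⨅ (v : ℝ → Ω → Rvec k) (_ : v ∈ Ucap μ k T L n), capCost μ T L f h g v with hI
  have hIle : ∀ v ∈ Ucap μ k T L n, I ≤ capCost μ T L f h g v := fun v hv =>
    iInf₂_le v hv
  by_cases hItop : I = ⊤
  · refine ⟨fun _ _ => 0, zero_mem_Ucap, fun v hv => ?_⟩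
    have hvt : capCost μ T L f h g v = ⊤ := top_le_iff.mp (hItop ▸ hIle v hv)
    rw [hvt]; exact le_top
  -- setup Hilbert space
  haveI hfinρ : IsFiniteMeasure (volume.restrict (Ioc (0:ℝ) T)) :=
    ⟨by rw [Measure.restrict_apply_univ]; exact measure_Ioc_lt_top⟩
  set ν : Measure (ℝ × Ω) := (volume.restrict (Ioc (0:ℝ) T)).prod μ with hν
  set J : Lp (Rvec k) 2 ν → ℝ≥0∞ :=
    fun x => capCost μ T L f h g (fun t ω => x (t, ω)) with hJdef
  have hJ_eq : ∀ (x : Lp (Rvec k) 2 ν) (u : ℝ → Ω → Rvec k),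
      ((x : ℝ × Ω → Rvec k) =ᵐ[ν] fun p => u p.1 p.2) →
      J x = capCost μ T L f h g u := by
    intro x u hxu
    refine capCost_congr_ae ?_
    filter_upwards [hxu] with z hz
    exact hz
  set K : ℕ → Set (Lp (Rvec k) 2 ν) := fun m =>
    {x | (∃ u ∈ Ucap μ k T L n, (x : ℝ × Ω → Rvec k) =ᵐ[ν] fun p => u p.1 p.2) ∧
      J x ≤ I + ((m : ℝ≥0∞) + 1)⁻¹} with hK
  have hKanti : ∀ {m l : ℕ}, m ≤ l → K l ⊆ K m := by
    intro m l hml x hx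
    refine ⟨hx.1, hx.2.trans ?_⟩
    refine add_le_add le_rfl (ENNReal.inv_le_inv.mpr ?_)
    exact add_le_add (by exact_mod_cast hml) le_rfl
  have htoS : ∀ u ∈ Ucap μ k T L n, ∃ x : Lp (Rvec k) 2 ν,
      ((x : ℝ × Ω → Rvec k) =ᵐ[ν] fun p => u p.1 p.2) := by
    intro u hu
    exact ⟨MemLp.toLp (fun p : ℝ × Ω => u p.1 p.2) (mem_L2 hT hcomp hL_meas hu),
      MemLp.coeFn_toLp (mem_L2 hT hcomp hL_meas hu)⟩
  have hne : ∀ m, (K m).Nonempty := by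
    intro m
    have hlt : I < I + ((m : ℝ≥0∞) + 1)⁻¹ := ENNReal.lt_add_right hItop (by simp)
    rw [hI] at hlt
    obtain ⟨v, hv⟩ := iInf_lt_iff.mp hlt
    obtain ⟨hvU, hvlt⟩ := iInf_lt_iff.mp hv
    obtain ⟨x, hx⟩ := htoS v hvU
    exact ⟨x, ⟨v, hvU, hx⟩, by rw [hJ_eq x v hx]; exact hvlt.le⟩
  have hKclosed : ∀ m, IsClosed (K m) := by
    intro m
    refine IsSeqClosed.isClosed ?_
    intro y x hy hyx
    choose uw huw hxw using fun j => (hy j).1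
    have htim : TendstoInMeasure ν (fun j => ((y j : Lp (Rvec k) 2 ν) : ℝ × Ω → Rvec k))
        atTop (x : ℝ × Ω → Rvec k) := tendstoInMeasure_of_tendsto_Lp hyx
    obtain ⟨ns, hns, hnsae⟩ := htim.exists_seq_tendsto_ae
    have hall : ∀ᵐ p ∂ν, ∀ i, ((y (ns i) : Lp (Rvec k) 2 ν) : ℝ × Ω → Rvec k) p
        = uw (ns i) p.1 p.2 := ae_all_iff.mpr fun i => hxw (ns i)
    have hconv_ae : ∀ᵐ p ∂ν,
        Tendsto (fun i => uw (ns i) p.1 p.2) atTop (𝓝 ((x : ℝ × Ω → Rvec k) p)) := by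
      filter_upwards [hnsae, hall] with p hp hpe
      exact hp.congr fun i => hpe i
    obtain ⟨w, hwU, hwlim⟩ := limit_mem_Ucap (fun i => huw (ns i))
    have hwx : ((x : Lp (Rvec k) 2 ν) : ℝ × Ω → Rvec k) =ᵐ[ν] fun p => w p.1 p.2 := by
      filter_upwards [hconv_ae] with p hp
      exact (hwlim p.1 p.2 _ hp).symm
    refine ⟨⟨w, hwU, hwx⟩, ?_⟩
    have hJxw : J x = capCost μ T L f h g w := hJ_eq x w hwx
    rw [hJxw]
    have hconv_sw : ∀ᵐ ω ∂μ, ∀ᵐ t ∂(volume.restrict (Ioc (0:ℝ) T)),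
        Tendsto (fun i => uw (ns i) t ω) atTop (𝓝 (w t ω)) := by
      refine ae_swap (P := fun z : ℝ × Ω =>
        Tendsto (fun i => uw (ns i) z.1 z.2) atTop (𝓝 (w z.1 z.2))) ?_
      filter_upwards [hconv_ae] with p hp
      rw [hwlim p.1 p.2 _ hp]
      exact hp
    have hlsc := capCost_lsc hT hcomp hL_meas hLb hLbeq hf_cont hh_meas hg_meas
      hh_cwa hg_cwa (fun i => huw (ns i)) hwU hconv_sw
    refine hlsc.trans ?_
    have hbnd : ∀ i, capCost μ T L f h g (uw (ns i)) ≤ I + ((m : ℝ≥0∞) + 1)⁻¹ := by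
      intro i
      rw [← hJ_eq _ _ (hxw (ns i))]
      exact (hy (ns i)).2
    calc liminf (fun i => capCost μ T L f h g (uw (ns i))) atTop
        ≤ liminf (fun _ => I + ((m : ℝ≥0∞) + 1)⁻¹) atTop :=
          liminf_le_liminf (Eventually.of_forall hbnd)
      _ = I + ((m : ℝ≥0∞) + 1)⁻¹ := liminf_const _
  have hKconv : ∀ m, Convex ℝ (K m) := by
    intro m x hx y hy a b ha hb hab
    obtain ⟨⟨ux, hux, hxeq⟩, hxJ⟩ := hx
    obtain ⟨⟨uy, huy, hyeq⟩, hyJ⟩ := hy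
    have hcombo := combo_mem_Ucap hux huy ha hb hab
    have hzeq : ((a • x + b • y : Lp (Rvec k) 2 ν) : ℝ × Ω → Rvec k)
        =ᵐ[ν] fun p => a • ux p.1 p.2 + b • uy p.1 p.2 := by
      filter_upwards [Lp.coeFn_add (a • x) (b • y), Lp.coeFn_smul a x, Lp.coeFn_smul b y,
        hxeq, hyeq] with p h1 h2 h3 h4 h5
      rw [h1]
      show (a • x : Lp (Rvec k) 2 ν) p + (b • y : Lp (Rvec k) 2 ν) p = _
      rw [h2, h3]
      show a • (x : ℝ × Ω → Rvec k) p + b • (y : ℝ × Ω → Rvec k) p = _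
      rw [h4, h5]
    refine ⟨⟨_, hcombo, hzeq⟩, ?_⟩
    have hJz : J (a • x + b • y)
        = capCost μ T L f h g (fun t ω => a • ux t ω + b • uy t ω) := hJ_eq _ _ hzeq
    rw [hJz]
    have hcv := capCost_convex hT hcomp hL_meas hLb hLbeq hf_cont hf_nonneg hh_meas hg_meas
      hh_nonneg hg_nonneg hh_convex hg_convex hux huy ha hb hab
    refine hcv.trans ?_
    rw [← hJ_eq x ux hxeq, ← hJ_eq y uy hyeq]
    calc ENNReal.ofReal a * J x + ENNReal.ofReal b * J y
        ≤ ENNReal.ofReal a * (I + ((m : ℝ≥0∞) + 1)⁻¹)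
          + ENNReal.ofReal b * (I + ((m : ℝ≥0∞) + 1)⁻¹) :=
          add_le_add (mul_le_mul_right hxJ _) (mul_le_mul_right hyJ _)
      _ = (ENNReal.ofReal a + ENNReal.ofReal b) * (I + ((m : ℝ≥0∞) + 1)⁻¹) := by ring
      _ = 1 * (I + ((m : ℝ≥0∞) + 1)⁻¹) := by
          rw [← ENNReal.ofReal_add ha hb, hab, ENNReal.ofReal_one]
      _ = I + ((m : ℝ≥0∞) + 1)⁻¹ := one_mul _
  -- minimal norm elements and Cauchy sequence
  obtain ⟨xstar, hxstarK⟩ : ∃ x : Lp (Rvec k) 2 ν, ∀ m, x ∈ K m := by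
    haveI : ∀ m, Nonempty (K m) := fun m => (hne m).to_subtype
    have hbddBelow : ∀ m, BddBelow
        (range fun w : K m => ‖(0 : Lp (Rvec k) 2 ν) - (w : Lp (Rvec k) 2 ν)‖) :=
      fun m => ⟨0, by rintro r ⟨w, rfl⟩; exact norm_nonneg _⟩
    set dm : ℕ → ℝ := fun m => ⨅ w : K m, ‖(0 : Lp (Rvec k) 2 ν) - (w : Lp (Rvec k) 2 ν)‖
      with hdm
    have hdm0 : ∀ m, 0 ≤ dm m := fun m => le_ciInf fun w => norm_nonneg _
    set R : ℝ := (measureUnivNNReal ν : ℝ) ^ (2 : ℝ≥0∞).toReal⁻¹ * ((n : ℝ) * Real.sqrt k)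
      with hR
    have hSb : ∀ x : Lp (Rvec k) 2 ν,
        (∃ u ∈ Ucap μ k T L n, ((x : Lp (Rvec k) 2 ν) : ℝ × Ω → Rvec k) =ᵐ[ν]
          fun p => u p.1 p.2) → ‖x‖ ≤ R := by
      rintro x ⟨u, hu, hxu⟩
      refine Lp.norm_le_of_ae_bound (by positivity) ?_
      filter_upwards [hxu] with p hp
      rw [hp]
      exact norm_le_of_Icc fun i => hu.2 p.1 p.2 i
    have hdmR : ∀ m, dm m ≤ R := by
      intro m
      obtain ⟨x0, hx0⟩ := hne m
      refine (ciInf_le (hbddBelow m) ⟨x0, hx0⟩).trans ?_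
      rw [zero_sub, norm_neg]
      exact hSb x0 hx0.1
    have hdmmono : Monotone dm := by
      intro m l hml
      refine le_ciInf fun w => ?_
      exact ciInf_le (hbddBelow m) ⟨w.1, hKanti hml w.2⟩
    set D : ℝ := ⨆ m, dm m with hD
    have hDbdd : BddAbove (range dm) := ⟨R, by rintro r ⟨m', rfl⟩; exact hdmR m'⟩
    have hdmD : ∀ m, dm m ≤ D := fun m => le_ciSup hDbdd m
    have hdm_tendsto : Tendsto dm atTop (𝓝 D) := tendsto_atTop_ciSup hdmmono hDbdd
    have hproj : ∀ m, ∃ v ∈ K m, ‖(0 : Lp (Rvec k) 2 ν) - v‖ = dm m := fun m =>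
      exists_norm_eq_iInf_of_complete_convex (hne m) ((hKclosed m).isComplete)
        (hKconv m) 0
    choose xm hxmK hxm_norm using hproj
    have hxm_norm' : ∀ m, ‖xm m‖ = dm m := by
      intro m; rw [← hxm_norm m, zero_sub, norm_neg]
    have hkey : ∀ {a b : ℕ}, a ≤ b → ‖xm a - xm b‖ ^ 2 ≤ 2 * (D ^ 2 - dm a ^ 2) := by
      intro a b hab2
      have hpar := parallelogram_law_with_norm ℝ (xm a) (xm b)
      have hpar' : ‖xm a + xm b‖ ^ 2 + ‖xm a - xm b‖ ^ 2
          = 2 * (‖xm a‖ ^ 2 + ‖xm b‖ ^ 2) := by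
        simpa [pow_two] using hpar
      rw [hxm_norm' a, hxm_norm' b] at hpar'
      have hmidK : ((1/2 : ℝ) • xm a + (1/2 : ℝ) • xm b) ∈ K a :=
        hKconv a (hxmK a) (hKanti hab2 (hxmK b)) (by norm_num) (by norm_num) (by norm_num)
      have hmid : dm a ≤ (1/2 : ℝ) * ‖xm a + xm b‖ := by
        have h5 : dm a ≤ ‖(0 : Lp (Rvec k) 2 ν) - ((1/2 : ℝ) • xm a + (1/2 : ℝ) • xm b)‖ :=
          ciInf_le (hbddBelow a) ⟨_, hmidK⟩
        have h6 : (0 : Lp (Rvec k) 2 ν) - ((1/2 : ℝ) • xm a + (1/2 : ℝ) • xm b)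
            = -((1/2 : ℝ) • (xm a + xm b)) := by rw [smul_add]; abel
        rw [h6, norm_neg, norm_smul, Real.norm_eq_abs] at h5
        have h7 : |(1/2 : ℝ)| = 1/2 := by norm_num
        rw [h7] at h5
        exact h5
      have h4 : 4 * dm a ^ 2 ≤ ‖xm a + xm b‖ ^ 2 := by
        nlinarith [hdm0 a, norm_nonneg (xm a + xm b)]
      have hDb : dm b ≤ D := hdmD b
      nlinarith [hpar', h4, hdm0 b]
    have hcauchy : CauchySeq xm := by
      refine cauchySeq_of_le_tendsto_0 (fun N => Real.sqrt (2 * (D ^ 2 - dm N ^ 2))) ?_ ?_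
      · intro a b N hNa hNb
        have key : ∀ {a b : ℕ}, a ≤ b → N ≤ a →
            dist (xm a) (xm b) ≤ Real.sqrt (2 * (D ^ 2 - dm N ^ 2)) := by
          intro a b hab2 hNa2
          rw [dist_eq_norm]
          have h1 := hkey hab2
          have h2 : 2 * (D ^ 2 - dm a ^ 2) ≤ 2 * (D ^ 2 - dm N ^ 2) := by
            have := hdmmono hNa2
            nlinarith [hdm0 N]
          refine (Real.le_sqrt (norm_nonneg _) ?_).mpr (h1.trans h2)
          nlinarith [hdmD N, hdm0 N]
        rcases le_total a b with hab2 | hab2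
        · exact key hab2 hNa
        · rw [dist_comm]; exact key hab2 hNb
      · have h2 : Tendsto (fun N => 2 * (D ^ 2 - dm N ^ 2)) atTop
            (𝓝 (2 * (D ^ 2 - D ^ 2))) :=
          (tendsto_const_nhds.sub (hdm_tendsto.pow 2)).const_mul 2
        have h4 : Tendsto (fun N => Real.sqrt (2 * (D ^ 2 - dm N ^ 2))) atTop
            (𝓝 (Real.sqrt (2 * (D ^ 2 - D ^ 2)))) :=
          (Real.continuous_sqrt.tendsto _).comp h2
        simpa only [sub_self, mul_zero, Real.sqrt_zero] using h4
    obtain ⟨xs, hxs⟩ := cauchySeq_tendsto_of_complete hcauchy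
    refine ⟨xs, fun m => ?_⟩
    refine (hKclosed m).mem_of_tendsto hxs ?_
    filter_upwards [eventually_ge_atTop m] with j hj
    exact hKanti hj (hxmK j)
  obtain ⟨⟨ustar, hustar, hxeq⟩, -⟩ := hxstarK 0
  refine ⟨ustar, hustar, fun v hv => ?_⟩
  have hJx : capCost μ T L f h g ustar = J xstar := (hJ_eq xstar ustar hxeq).symm
  have hJI : J xstar ≤ I := by
    refine ENNReal.le_of_forall_pos_le_add fun ε hε hIlt => ?_
    obtain ⟨m, hm⟩ := ENNReal.exists_inv_nat_lt
      (by exact_mod_cast hε.ne' : ((ε : ℝ≥0∞)) ≠ 0)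
    refine ((hxstarK m).2).trans ?_
    refine add_le_add le_rfl ?_
    refine le_trans ?_ hm.le
    gcongr
    exact le_add_of_nonneg_right zero_le_one
  calc capCost μ T L f h g ustar = J xstar := hJx
    _ ≤ I := hJI
    _ ≤ capCost μ T L f h g v := hIle v hv
end
end

section
/- An L^p estimate: Let p ≥ 1 and let X, Y be nonnegative random variables on a probability space with X ∈ L¹ and Y ∈ L^p. Suppose that E[(X − r)⁺] ≤ E[Y · 1_{{X > r}}] for all r ≥ 0. Then X ∈ L^p and ‖X‖_p ≤ p ‖Y‖_p. -/
open MeasureTheory Set Filter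

noncomputable section

open intervalIntegral
open scoped ENNReal NNReal

theorem auxnn {p r : ℝ} (hp : 1 < p) (hr : 0 ≤ r) : 0 ≤ p*(p-1)*r^(p-2) :=
  mul_nonneg (mul_nonneg (by linarith) (by linarith)) (Real.rpow_nonneg hr _)

theorem auxR1 {p x : ℝ} (hp : 1 < p) (hx : 0 < x) :
    ∫ r in (0:ℝ)..x, p*(p-1)*r^(p-2)*(x-r) = x ^ p := by
  have h2 : (-1:ℝ) < p - 2 := by linarith
  have h1 : (-1:ℝ) < p - 1 := by linarith
  have i2 : IntervalIntegrable (fun r : ℝ => r ^ (p-2)) volume 0 x :=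
    intervalIntegral.intervalIntegrable_rpow' h2
  have key : ∀ r : ℝ, r ∈ Set.uIcc (0:ℝ) x → p*(p-1)*r^(p-2)*(x-r)
      = (p*(p-1)*x) * r^(p-2) - (p*(p-1)) * (r^(p-2) * r) := by
    intro r _; ring
  rw [intervalIntegral.integral_congr key]
  have hrr : ∀ r : ℝ, r ∈ Set.uIcc (0:ℝ) x → (0:ℝ) ≤ r := by
    intro r hr
    rcases Set.mem_uIcc.1 hr with h | h
    · exact h.1
    · linarith [h.1, hx]
  have hpow : ∀ r : ℝ, r ∈ Set.uIcc (0:ℝ) x → r ^ (p-2) * r = r ^ (p-1) := by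
    intro r hr
    rcases eq_or_lt_of_le (hrr r hr) with h0 | h0
    · rw [← h0]; simp [Real.zero_rpow (by linarith : p - 1 ≠ 0)]
    · rw [← Real.rpow_add_one h0.ne' (p-2)]
      congr 1 <;> ring
  rw [intervalIntegral.integral_sub ((i2.const_mul _)) (by
    exact IntervalIntegrable.const_mul
      (i2.mul_continuousOn (Continuous.continuousOn continuous_id)) _)]
  rw [intervalIntegral.integral_const_mul, intervalIntegral.integral_const_mul,
    intervalIntegral.integral_congr hpow,
    integral_rpow (Or.inl h2), integral_rpow (Or.inl h1)]
  have z2 : (0:ℝ) ^ (p-2+1) = 0 := Real.zero_rpow (by linarith)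
  have z1 : (0:ℝ) ^ (p-1+1) = 0 := Real.zero_rpow (by linarith)
  rw [z2, z1]
  have e2 : p - 2 + 1 = p - 1 := by ring
  have e1 : p - 1 + 1 = p := by ring
  rw [e2, e1]
  have hxp : x * x ^ (p-1) = x ^ p := by
    rw [mul_comm, ← Real.rpow_add_one hx.ne' (p-1)]
    congr 1 <;> ring
  have hp0 : p ≠ 0 := by linarith
  have hp1 : p - 1 ≠ 0 := by linarith
  field_simp
  linear_combination p*hxp

theorem auxR2 {p x : ℝ} (hp : 1 < p) (hx : 0 ≤ x) :
    ∫ r in (0:ℝ)..x, p*(p-1)*r^(p-2) = p * x ^ (p-1) := by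
  have h2 : (-1:ℝ) < p - 2 := by linarith
  rw [intervalIntegral.integral_const_mul, integral_rpow (Or.inl h2),
    Real.zero_rpow (by linarith : p - 2 + 1 ≠ 0)]
  have e2 : p - 2 + 1 = p - 1 := by ring
  rw [e2]
  have : p - 1 ≠ 0 := by linarith
  field_simp
  ring

theorem auxIntble {p x n : ℝ} (hp : 1 < p) (hn : 0 ≤ n) :
    IntervalIntegrable (fun r : ℝ => p*(p-1)*r^(p-2)*max (x-r) 0) volume 0 n := by
  have h2 : (-1:ℝ) < p - 2 := by linarith
  have hfeq : (fun r : ℝ => p*(p-1)*r^(p-2)*max (x-r) 0)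
      = fun r => r^(p-2) * (p*(p-1)*max (x-r) 0) := by funext r; ring
  rw [hfeq]
  exact (intervalIntegral.intervalIntegrable_rpow' h2).mul_continuousOn
    (Continuous.continuousOn (by fun_prop))

theorem auxL1 {p n x : ℝ} (hp : 1 < p) (hx : 0 ≤ x) (hxn : x ≤ n) :
    ∫⁻ r in Set.Ioc (0:ℝ) n, ENNReal.ofReal (p*(p-1)*r^(p-2)) * ENNReal.ofReal (max (x - r) 0)
      = ENNReal.ofReal (x ^ p) := by
  have hn : (0:ℝ) ≤ n := le_trans hx hxn
  have h2 : (-1:ℝ) < p - 2 := by linarith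
  rcases eq_or_lt_of_le hx with h0 | h0
  · have : ∀ᵐ r ∂(volume.restrict (Set.Ioc (0:ℝ) n)),
        ENNReal.ofReal (p*(p-1)*r^(p-2)) * ENNReal.ofReal (max (x - r) 0) = 0 := by
      filter_upwards [ae_restrict_mem measurableSet_Ioc] with r hr
      have : max (x - r) 0 = 0 := max_eq_right (by rw [← h0]; linarith [hr.1])
      simp [this]
    rw [lintegral_congr_ae this, lintegral_zero, ← h0,
      Real.zero_rpow (by linarith : p ≠ 0), ENNReal.ofReal_zero]
  · -- x > 0
    have hcong : ∀ᵐ r ∂(volume.restrict (Set.Ioc (0:ℝ) n)),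
        ENNReal.ofReal (p*(p-1)*r^(p-2)) * ENNReal.ofReal (max (x - r) 0)
          = ENNReal.ofReal (p*(p-1)*r^(p-2)*max (x - r) 0) := by
      filter_upwards [ae_restrict_mem measurableSet_Ioc] with r hr
      have hr0 : (0:ℝ) < r := hr.1
      rw [← ENNReal.ofReal_mul (auxnn hp hr0.le)]
    rw [lintegral_congr_ae hcong]
    have hi : IntegrableOn (fun r : ℝ => p*(p-1)*r^(p-2)*max (x-r) 0) (Set.Ioc 0 n) :=
      (auxIntble hp hn).1
    have hxmem : x ∈ Set.uIcc (0:ℝ) n := Set.mem_uIcc.2 (Or.inl ⟨hx, hxn⟩)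
    have h0mem : (0:ℝ) ∈ Set.uIcc (0:ℝ) n := Set.left_mem_uIcc
    have hnmem : n ∈ Set.uIcc (0:ℝ) n := Set.right_mem_uIcc
    have hi1 : IntervalIntegrable (fun r : ℝ => p*(p-1)*r^(p-2)*max (x-r) 0) volume 0 x :=
      (auxIntble hp hn).mono_set (Set.uIcc_subset_uIcc h0mem hxmem)
    have hi2 : IntervalIntegrable (fun r : ℝ => p*(p-1)*r^(p-2)*max (x-r) 0) volume x n :=
      (auxIntble hp hn).mono_set (Set.uIcc_subset_uIcc hxmem hnmem)
    have nn : 0 ≤ᵐ[volume.restrict (Set.Ioc (0:ℝ) n)]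
        fun r : ℝ => p*(p-1)*r^(p-2)*max (x-r) 0 := by
      filter_upwards [ae_restrict_mem measurableSet_Ioc] with r hr
      exact mul_nonneg (auxnn hp hr.1.le) (le_max_right _ _)
    rw [← ofReal_integral_eq_lintegral_ofReal hi nn]
    · congr 1
      rw [← intervalIntegral.integral_of_le hn,
        ← intervalIntegral.integral_add_adjacent_intervals hi1 hi2]
      have hz : ∫ r in x..n, p*(p-1)*r^(p-2)*max (x-r) 0 = 0 := by
        rw [intervalIntegral.integral_congr (g := fun _ => (0:ℝ)) ?_]
        · simp
        · intro r hr
          rw [Set.uIcc_of_le hxn] at hr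
          have : max (x - r) 0 = 0 := max_eq_right (by linarith [hr.1])
          simp [this]
      rw [hz, add_zero, intervalIntegral.integral_congr (g := fun r => p*(p-1)*r^(p-2)*(x-r)) ?_,
        auxR1 hp h0]
      intro r hr
      rw [Set.uIcc_of_le hx] at hr
      have : max (x - r) 0 = x - r := max_eq_left (by linarith [hr.2])
      simp only [this]

theorem auxL2 {p n x : ℝ} (hp : 1 < p) (hx : 0 ≤ x) (hxn : x ≤ n) :
    ∫⁻ r in Set.Ioc (0:ℝ) n,
        ENNReal.ofReal (p*(p-1)*r^(p-2)) * (Set.Iio x).indicator (fun _ => (1:ℝ≥0∞)) r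
      = ENNReal.ofReal (p * x ^ (p-1)) := by
  have h2 : (-1:ℝ) < p - 2 := by linarith
  have heq : ∀ r : ℝ,
      ENNReal.ofReal (p*(p-1)*r^(p-2)) * (Set.Iio x).indicator (fun _ => (1:ℝ≥0∞)) r
        = (Set.Iio x).indicator (fun r => ENNReal.ofReal (p*(p-1)*r^(p-2))) r := by
    intro r
    by_cases h : r ∈ Set.Iio x <;> simp [Set.indicator_apply, h]
  simp only [heq]
  rw [lintegral_indicator measurableSet_Iio, Measure.restrict_restrict measurableSet_Iio]
  have hset : Set.Iio x ∩ Set.Ioc 0 n = Set.Ioo 0 x := by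
    ext r
    simp only [Set.mem_inter_iff, Set.mem_Iio, Set.mem_Ioc, Set.mem_Ioo]
    constructor
    · rintro ⟨h1, h2, h3⟩; exact ⟨h2, h1⟩
    · rintro ⟨h1, h2'⟩; exact ⟨h2', h1, by linarith⟩
  rw [hset, Measure.restrict_congr_set Ioo_ae_eq_Ioc]
  have hi : IntegrableOn (fun r : ℝ => p*(p-1)*r^(p-2)) (Set.Ioc 0 x) := by
    have := ((intervalIntegral.intervalIntegrable_rpow' h2 (a := 0) (b := x)).const_mul (p*(p-1)))
    exact this.1
  have nn : 0 ≤ᵐ[volume.restrict (Set.Ioc (0:ℝ) x)] fun r : ℝ => p*(p-1)*r^(p-2) := by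
    filter_upwards [ae_restrict_mem measurableSet_Ioc] with r hr
    exact auxnn hp hr.1.le
  rw [← ofReal_integral_eq_lintegral_ofReal hi nn,
    ← intervalIntegral.integral_of_le hx, auxR2 hp hx]

theorem auxKey {Ω : Type*} [MeasurableSpace Ω] (μ : Measure Ω)
    [IsProbabilityMeasure μ] {p : ℝ} (hp : 1 < p)
    (X Y : Ω → ℝ) (hXmeas : Measurable X) (hYmeas : Measurable Y)
    (hX0 : ∀ ω, 0 ≤ X ω) (hY0 : ∀ ω, 0 ≤ Y ω)
    (hX1 : Integrable X μ)
    (hYp : MemLp Y (ENNReal.ofReal p) μ)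
    (hineq : ∀ r : ℝ, 0 ≤ r →
      (∫ ω, max (X ω - r) 0 ∂μ) ≤ ∫ ω, ({ω' | r < X ω'}).indicator Y ω ∂μ)
    (n : ℕ) :
    ∫⁻ ω, ENNReal.ofReal ((min (X ω) n) ^ p) ∂μ
      ≤ (ENNReal.ofReal p * eLpNorm Y (ENNReal.ofReal p) μ) ^ p := by
  have hp0 : (0:ℝ) < p := lt_trans one_pos hp
  set Z : Ω → ℝ := fun ω => min (X ω) (n:ℝ) with hZdef
  have hZmeas : Measurable Z := hXmeas.min measurable_const
  have hZ0 : ∀ ω, 0 ≤ Z ω := fun ω => le_min (hX0 ω) (Nat.cast_nonneg n)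
  have hZn : ∀ ω, Z ω ≤ (n:ℝ) := fun ω => min_le_right _ _
  set g : ℝ → ℝ≥0∞ := fun r => ENNReal.ofReal (p*(p-1)*r^(p-2)) with hgdef
  have hgmeas : Measurable g := by fun_prop
  set A : ℝ≥0∞ := ∫⁻ ω, ENNReal.ofReal ((Z ω) ^ p) ∂μ with hAdef
  set Ly : ℝ≥0∞ := eLpNorm Y (ENNReal.ofReal p) μ with hLydef
  set q : ℝ := Real.conjExponent p with hqdef
  have hpq : p.HolderConjugate q := Real.HolderConjugate.conjExponent hp
  -- inner inequality
  have hYint : Integrable Y μ := hYp.integrable (ENNReal.one_le_ofReal.2 hp.le)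
  have inner : ∀ r : ℝ, r ∈ Set.Ioc (0:ℝ) (n:ℝ) →
      (∫⁻ ω, ENNReal.ofReal (max (Z ω - r) 0) ∂μ)
        ≤ ∫⁻ ω, ENNReal.ofReal (({ω' | r < Z ω'}).indicator Y ω) ∂μ := by
    rintro r ⟨hr0, hrn⟩
    rcases eq_or_lt_of_le hrn with heq | hlt
    · have hz : ∀ ω, ENNReal.ofReal (max (Z ω - r) 0) = 0 := by
        intro ω
        rw [ENNReal.ofReal_eq_zero, max_le_iff]
        constructor
        · rw [heq]; linarith [hZn ω]
        · exact le_rfl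
      simp only [hz, lintegral_zero]
      exact zero_le
    · have hXint : Integrable (fun ω => max (X ω - r) 0) μ := by
        apply hX1.mono' (((hXmeas.sub measurable_const).max measurable_const).aestronglyMeasurable)
        filter_upwards with ω
        rw [Real.norm_of_nonneg (le_max_right _ _)]
        exact max_le (by simp only [Pi.sub_apply]; linarith [hX0 ω]) (hX0 ω)
      have hindint : Integrable (fun ω => ({ω' | r < X ω'}).indicator Y ω) μ :=
        hYint.indicator (hXmeas measurableSet_Ioi)
      have hseteq : {ω' | r < Z ω'} = {ω' | r < X ω'} := by
        ext ω'
        simp only [mem_setOf_eq, hZdef, lt_min_iff]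
        exact ⟨fun h => h.1, fun h => ⟨h, hlt⟩⟩
      rw [hseteq]
      calc (∫⁻ ω, ENNReal.ofReal (max (Z ω - r) 0) ∂μ)
          ≤ ∫⁻ ω, ENNReal.ofReal (max (X ω - r) 0) ∂μ := by
            apply lintegral_mono fun ω => ENNReal.ofReal_le_ofReal ?_
            exact max_le_max (sub_le_sub_right (min_le_left _ _) r) le_rfl
        _ = ENNReal.ofReal (∫ ω, max (X ω - r) 0 ∂μ) :=
            (ofReal_integral_eq_lintegral_ofReal hXint
              (Eventually.of_forall fun ω => le_max_right _ _)).symm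
        _ ≤ ENNReal.ofReal (∫ ω, ({ω' | r < X ω'}).indicator Y ω ∂μ) :=
            ENNReal.ofReal_le_ofReal (hineq r hr0.le)
        _ = ∫⁻ ω, ENNReal.ofReal (({ω' | r < X ω'}).indicator Y ω) ∂μ :=
            ofReal_integral_eq_lintegral_ofReal hindint
              (Eventually.of_forall fun ω => Set.indicator_nonneg (fun x _ => hY0 x) ω)
  -- Tonelli measurability
  have hF1 : Measurable (fun z : Ω × ℝ => g z.2 * ENNReal.ofReal (max (Z z.1 - z.2) 0)) := by
    apply (hgmeas.comp measurable_snd).mul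
    exact ENNReal.measurable_ofReal.comp
      (((hZmeas.comp measurable_fst).sub measurable_snd).max measurable_const)
  have hF2 : Measurable (fun z : Ω × ℝ =>
      g z.2 * ENNReal.ofReal (({ω' | z.2 < Z ω'}).indicator Y z.1)) := by
    have hrw : (fun z : Ω × ℝ => g z.2 * ENNReal.ofReal (({ω' | z.2 < Z ω'}).indicator Y z.1))
        = fun z : Ω × ℝ => g z.2 *
            ({z' : Ω × ℝ | z'.2 < Z z'.1}).indicator (fun z' => ENNReal.ofReal (Y z'.1)) z := by
      funext z
      simp only [Set.indicator_apply, mem_setOf_eq, apply_ite ENNReal.ofReal, ENNReal.ofReal_zero]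
    rw [hrw]
    apply (hgmeas.comp measurable_snd).mul
    exact (ENNReal.measurable_ofReal.comp (hYmeas.comp measurable_fst)).indicator
      (measurableSet_lt measurable_snd (hZmeas.comp measurable_fst))
  -- key chain
  have main : A ≤ ENNReal.ofReal p * (∫⁻ ω,
      ENNReal.ofReal (Y ω) * ENNReal.ofReal (Z ω ^ (p-1)) ∂μ) := by
    calc A = ∫⁻ ω, ∫⁻ r in Set.Ioc (0:ℝ) (n:ℝ),
          g r * ENNReal.ofReal (max (Z ω - r) 0) ∂volume ∂μ :=
        lintegral_congr fun ω => (auxL1 hp (hZ0 ω) (hZn ω)).symm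
      _ = ∫⁻ r in Set.Ioc (0:ℝ) (n:ℝ), ∫⁻ ω,
          g r * ENNReal.ofReal (max (Z ω - r) 0) ∂μ ∂volume :=
        lintegral_lintegral_swap hF1.aemeasurable
      _ = ∫⁻ r in Set.Ioc (0:ℝ) (n:ℝ),
          g r * ∫⁻ ω, ENNReal.ofReal (max (Z ω - r) 0) ∂μ ∂volume :=
        lintegral_congr fun r => lintegral_const_mul _
          (ENNReal.measurable_ofReal.comp ((hZmeas.sub measurable_const).max measurable_const))
      _ ≤ ∫⁻ r in Set.Ioc (0:ℝ) (n:ℝ),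
          g r * ∫⁻ ω, ENNReal.ofReal (({ω' | r < Z ω'}).indicator Y ω) ∂μ ∂volume := by
        apply lintegral_mono_ae
        filter_upwards [ae_restrict_mem measurableSet_Ioc] with r hr
        exact mul_le_mul_right (inner r hr) _
      _ = ∫⁻ r in Set.Ioc (0:ℝ) (n:ℝ), ∫⁻ ω,
          g r * ENNReal.ofReal (({ω' | r < Z ω'}).indicator Y ω) ∂μ ∂volume := by
        refine lintegral_congr fun r => (lintegral_const_mul _ ?_).symm
        exact ENNReal.measurable_ofReal.comp (hYmeas.indicator (hZmeas measurableSet_Ioi))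
      _ = ∫⁻ ω, ∫⁻ r in Set.Ioc (0:ℝ) (n:ℝ),
          g r * ENNReal.ofReal (({ω' | r < Z ω'}).indicator Y ω) ∂volume ∂μ :=
        (lintegral_lintegral_swap hF2.aemeasurable).symm
      _ = ∫⁻ ω, ENNReal.ofReal (Y ω) * ENNReal.ofReal (p * Z ω ^ (p-1)) ∂μ := by
        refine lintegral_congr fun ω => ?_
        have hptw : ∀ r : ℝ, g r * ENNReal.ofReal (({ω' | r < Z ω'}).indicator Y ω)
            = ENNReal.ofReal (Y ω) *
              (g r * (Set.Iio (Z ω)).indicator (fun _ => (1:ℝ≥0∞)) r) := by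
          intro r
          by_cases h : r < Z ω
          · simp only [Set.indicator_apply, mem_setOf_eq, mem_Iio, if_pos h, mul_one]
            ring
          · simp only [Set.indicator_apply, mem_setOf_eq, mem_Iio, if_neg h, mul_zero,
              ENNReal.ofReal_zero]
        simp only [hptw]
        rw [lintegral_const_mul _ (f := fun r => g r * (Set.Iio (Z ω)).indicator (fun _ => (1:ℝ≥0∞)) r) (hgmeas.mul (measurable_const.indicator measurableSet_Iio)),
          auxL2 hp (hZ0 ω) (hZn ω)]
      _ = ENNReal.ofReal p * (∫⁻ ω,
          ENNReal.ofReal (Y ω) * ENNReal.ofReal (Z ω ^ (p-1)) ∂μ) := by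
        have : ∀ ω, ENNReal.ofReal (Y ω) * ENNReal.ofReal (p * Z ω ^ (p-1))
            = ENNReal.ofReal p * (ENNReal.ofReal (Y ω) * ENNReal.ofReal (Z ω ^ (p-1))) := by
          intro ω
          rw [ENNReal.ofReal_mul hp0.le]
          ring
        simp only [this]
        exact lintegral_const_mul _ (by fun_prop)
  -- Hölder
  have holder := ENNReal.lintegral_mul_le_Lp_mul_Lq μ hpq
    (f := fun ω => ENNReal.ofReal (Y ω)) (g := fun ω => ENNReal.ofReal (Z ω ^ (p-1)))
    (by fun_prop) (by fun_prop)
  have hfp : ∀ ω, (ENNReal.ofReal (Y ω)) ^ p = ENNReal.ofReal (Y ω ^ p) := fun ω =>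
    ENNReal.ofReal_rpow_of_nonneg (hY0 ω) hp0.le
  have hgq : ∀ ω, (ENNReal.ofReal (Z ω ^ (p-1))) ^ q = ENNReal.ofReal (Z ω ^ p) := by
    intro ω
    rw [ENNReal.ofReal_rpow_of_nonneg (Real.rpow_nonneg (hZ0 ω) _) hpq.symm.nonneg,
      ← Real.rpow_mul (hZ0 ω), hpq.sub_one_mul_conj]
  have hLy : Ly = (∫⁻ ω, (ENNReal.ofReal (Y ω)) ^ p ∂μ) ^ (1/p) := by
    rw [hLydef, eLpNorm_eq_lintegral_rpow_enorm_toReal (by simpa using hp0) ENNReal.ofReal_ne_top,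
      ENNReal.toReal_ofReal hp0.le]
    congr 1
    refine lintegral_congr fun ω => ?_
    rw [Real.enorm_eq_ofReal (hY0 ω)]
  have holder' : (∫⁻ ω, ENNReal.ofReal (Y ω) * ENNReal.ofReal (Z ω ^ (p-1)) ∂μ)
      ≤ Ly * A ^ (1/q) := by
    calc (∫⁻ ω, ENNReal.ofReal (Y ω) * ENNReal.ofReal (Z ω ^ (p-1)) ∂μ)
        ≤ (∫⁻ ω, (ENNReal.ofReal (Y ω)) ^ p ∂μ) ^ (1/p) *
          (∫⁻ ω, (ENNReal.ofReal (Z ω ^ (p-1))) ^ q ∂μ) ^ (1/q) := holder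
      _ = Ly * A ^ (1/q) := by
        rw [← hLy]
        congr 2
        exact lintegral_congr fun ω => hgq ω
  have hmain2 : A ≤ ENNReal.ofReal p * Ly * A ^ (1/q) := by
    calc A ≤ ENNReal.ofReal p * (∫⁻ ω,
          ENNReal.ofReal (Y ω) * ENNReal.ofReal (Z ω ^ (p-1)) ∂μ) := main
      _ ≤ ENNReal.ofReal p * (Ly * A ^ (1/q)) := mul_le_mul_right holder' _
      _ = ENNReal.ofReal p * Ly * A ^ (1/q) := (mul_assoc _ _ _).symm
  -- conclude
  have hAfin : A ≠ ⊤ := by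
    have hb : A ≤ ENNReal.ofReal ((n:ℝ) ^ p) * μ Set.univ := by
      rw [← lintegral_const]
      exact lintegral_mono fun ω => ENNReal.ofReal_le_ofReal
        (Real.rpow_le_rpow (hZ0 ω) (hZn ω) hp0.le)
    refine ne_top_of_le_ne_top ?_ hb
    exact ENNReal.mul_ne_top ENNReal.ofReal_ne_top (measure_ne_top μ _)
  by_cases hA0 : A = 0
  · rw [hA0]; exact zero_le
  · have hq0 : 0 < 1/q := by
      have := hpq.symm.pos
      positivity
    have hAq0 : A ^ (1/q) ≠ 0 := (ENNReal.rpow_pos (pos_iff_ne_zero.2 hA0) hAfin).ne'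
    have hAqtop : A ^ (1/q) ≠ ⊤ := ENNReal.rpow_ne_top_of_nonneg hq0.le hAfin
    have key2 : A ^ (1/p) * A ^ (1/q) ≤ (ENNReal.ofReal p * Ly) * A ^ (1/q) := by
      calc A ^ (1/p) * A ^ (1/q) = A ^ (1/p + 1/q) := (ENNReal.rpow_add _ _ hA0 hAfin).symm
        _ = A ^ (1:ℝ) := by
          rw [show (1:ℝ)/p + 1/q = p⁻¹ + q⁻¹ by rw [one_div, one_div], hpq.inv_add_inv_eq_inv, inv_one]
        _ = A := ENNReal.rpow_one A
        _ ≤ (ENNReal.ofReal p * Ly) * A ^ (1/q) := hmain2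
    have hfinal : A ^ (1/p) ≤ ENNReal.ofReal p * Ly :=
      (ENNReal.mul_le_mul_iff_left hAq0 hAqtop).1 key2
    have h1 : A = (A ^ ((1:ℝ)/p)) ^ p := by
      rw [← ENNReal.rpow_mul, one_div, inv_mul_cancel₀ hp0.ne', ENNReal.rpow_one]
    rw [h1]
    exact ENNReal.rpow_le_rpow hfinal hp0.le



/-- **An `L^p` estimate** (Lemma A.3): if nonnegative random variables `X ∈ L¹` and
`Y ∈ L^p` satisfy `E[(X-r)⁺] ≤ E[Y 1_{X>r}]` for all `r ≥ 0`, then `X ∈ L^p` and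
`‖X‖_p ≤ p ‖Y‖_p`. -/
theorem stmt15 {Ω : Type*} [MeasurableSpace Ω] (μ : Measure Ω)
    (hμ : IsProbabilityMeasure μ) (p : ℝ) (hp : 1 ≤ p)
    (X Y : Ω → ℝ) (hXmeas : Measurable X) (hYmeas : Measurable Y)
    (hX0 : ∀ ω, 0 ≤ X ω) (hY0 : ∀ ω, 0 ≤ Y ω)
    (hX1 : Integrable X μ)
    (hYp : MemLp Y (ENNReal.ofReal p) μ)
    (hineq : ∀ r : ℝ, 0 ≤ r →
      (∫ ω, max (X ω - r) 0 ∂μ) ≤ ∫ ω, ({ω' | r < X ω'}).indicator Y ω ∂μ) :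
    MemLp X (ENNReal.ofReal p) μ ∧
      eLpNorm X (ENNReal.ofReal p) μ ≤ ENNReal.ofReal p * eLpNorm Y (ENNReal.ofReal p) μ := by
  rcases eq_or_lt_of_le hp with hp1 | hp1
  · -- p = 1
    subst hp1
    rw [ENNReal.ofReal_one] at hYp ⊢
    have hYint : Integrable Y μ := memLp_one_iff_integrable.1 hYp
    have hindint : Integrable (fun ω => ({ω' | (0:ℝ) < X ω'}).indicator Y ω) μ :=
      hYint.indicator (hXmeas measurableSet_Ioi)
    have h0 : ∫ ω, X ω ∂μ ≤ ∫ ω, ({ω' | (0:ℝ) < X ω'}).indicator Y ω ∂μ := by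
      have := hineq 0 le_rfl
      have heq : ∀ ω, max (X ω - 0) 0 = X ω := fun ω => by
        rw [sub_zero]; exact max_eq_left (hX0 ω)
      simpa only [heq] using this
    have h1 : ∫ ω, ({ω' | (0:ℝ) < X ω'}).indicator Y ω ∂μ ≤ ∫ ω, Y ω ∂μ := by
      apply integral_mono hindint hYint
      exact Set.indicator_le_self' (fun x _ => hY0 x)
    refine ⟨memLp_one_iff_integrable.2 hX1, ?_⟩
    rw [one_mul, eLpNorm_one_eq_lintegral_enorm, eLpNorm_one_eq_lintegral_enorm]
    have hXr : ∀ ω, ‖X ω‖ₑ = ENNReal.ofReal (X ω) := fun ω =>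
      Real.enorm_eq_ofReal (hX0 ω)
    have hYr : ∀ ω, ‖Y ω‖ₑ = ENNReal.ofReal (Y ω) := fun ω =>
      Real.enorm_eq_ofReal (hY0 ω)
    simp only [hXr, hYr]
    rw [← ofReal_integral_eq_lintegral_ofReal hX1 (Eventually.of_forall hX0),
      ← ofReal_integral_eq_lintegral_ofReal hYint (Eventually.of_forall hY0)]
    exact ENNReal.ofReal_le_ofReal (le_trans h0 h1)
  · -- p > 1
    have hp0 : (0:ℝ) < p := lt_trans one_pos hp1
    set Ly : ℝ≥0∞ := eLpNorm Y (ENNReal.ofReal p) μ with hLydef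
    have key := auxKey μ hp1 X Y hXmeas hYmeas hX0 hY0 hX1 hYp hineq
    -- monotone convergence
    have hmono : Monotone fun (n : ℕ) (ω : Ω) => ENNReal.ofReal ((min (X ω) n) ^ p) := by
      intro a b hab
      intro ω
      apply ENNReal.ofReal_le_ofReal
      apply Real.rpow_le_rpow (le_min (hX0 ω) (Nat.cast_nonneg a))
        (min_le_min le_rfl (Nat.cast_le.2 hab)) hp0.le
    have hsup : ∀ ω, (⨆ n : ℕ, ENNReal.ofReal ((min (X ω) n) ^ p))
        = ENNReal.ofReal (X ω ^ p) := by
      intro ω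
      apply le_antisymm
      · refine iSup_le fun n => ENNReal.ofReal_le_ofReal ?_
        exact Real.rpow_le_rpow (le_min (hX0 ω) (Nat.cast_nonneg n)) (min_le_left _ _) hp0.le
      · have hc : ENNReal.ofReal (X ω ^ p)
            = ENNReal.ofReal ((min (X ω) (⌈X ω⌉₊ : ℝ)) ^ p) := by
          rw [min_eq_left (Nat.le_ceil _)]
        rw [hc]
        exact le_iSup (fun n : ℕ => ENNReal.ofReal ((min (X ω) n) ^ p)) ⌈X ω⌉₊
    have hMCT : ∫⁻ ω, ENNReal.ofReal (X ω ^ p) ∂μ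
        = ⨆ n : ℕ, ∫⁻ ω, ENNReal.ofReal ((min (X ω) n) ^ p) ∂μ := by
      rw [← lintegral_iSup (fun n => by fun_prop) hmono]
      exact lintegral_congr fun ω => (hsup ω).symm
    have hbound : ∫⁻ ω, ENNReal.ofReal (X ω ^ p) ∂μ ≤ (ENNReal.ofReal p * Ly) ^ p := by
      rw [hMCT]
      exact iSup_le key
    have heLp : eLpNorm X (ENNReal.ofReal p) μ
        = (∫⁻ ω, ENNReal.ofReal (X ω ^ p) ∂μ) ^ (1/p) := by
      rw [eLpNorm_eq_lintegral_rpow_enorm_toReal (by simpa using hp0) ENNReal.ofReal_ne_top,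
        ENNReal.toReal_ofReal hp0.le]
      congr 1
      refine lintegral_congr fun ω => ?_
      rw [Real.enorm_eq_ofReal (hX0 ω), ENNReal.ofReal_rpow_of_nonneg (hX0 ω) hp0.le]
    have hle : eLpNorm X (ENNReal.ofReal p) μ ≤ ENNReal.ofReal p * Ly := by
      rw [heLp]
      have h2 : ((ENNReal.ofReal p * Ly) ^ p) ^ ((1:ℝ)/p) = ENNReal.ofReal p * Ly := by
        rw [← ENNReal.rpow_mul, one_div, mul_inv_cancel₀ hp0.ne', ENNReal.rpow_one]
      rw [← h2]
      exact ENNReal.rpow_le_rpow hbound (by positivity)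
    refine ⟨⟨hXmeas.aestronglyMeasurable, ?_⟩, hle⟩
    apply lt_of_le_of_lt hle
    exact ENNReal.mul_lt_top ENNReal.ofReal_lt_top hYp.2
end
end

section
/- A Gronwall-type gradient bound for convex functions: Let φ : [0,∞)^k → [0,∞) be convex and continuously differentiable, and suppose there exist constants Φ ≥ 0 and M ≥ 0 such that |∇φ(a)| ≤ Φ + M φ(a) for all a ∈ [0,∞)^k. Then, for all a ∈ [0,∞)^k and x ∈ ℝ^k with a + x ∈ [0,∞)^k, |∇φ(a + x)| ≤ (Φ + M φ(a)) e^{M |x|}. -/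
open MeasureTheory Set Filter

noncomputable section

/-- **A Gronwall-type gradient bound for convex functions** (inequality (3.2)): if a
nonnegative convex `C¹` function `φ` on `[0,∞)^k` satisfies `|∇φ| ≤ Φ + M φ`, then
`|∇φ(a+x)| ≤ (Φ + M φ(a)) e^{M |x|}` whenever `a, a+x ∈ [0,∞)^k`. -/
theorem stmt16 (k : ℕ) (φ : Rvec k → ℝ) (Dφ : Rvec k → Rvec k)
    (Φ M : ℝ) (hΦ : 0 ≤ Φ) (hM : 0 ≤ M)
    (hφ_nonneg : ∀ a ∈ orthant k, 0 ≤ φ a)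
    (hφ_convex : ConvexOn ℝ (orthant k) φ)
    (hφ_diff : ∀ a ∈ orthant k,
      HasFDerivWithinAt φ ((innerSL ℝ) (Dφ a)) (orthant k) a)
    (hφ_dcont : ContinuousOn Dφ (orthant k))
    (hbound : ∀ a ∈ orthant k, ‖Dφ a‖ ≤ Φ + M * φ a) :
    ∀ a ∈ orthant k, ∀ x : Rvec k, a + x ∈ orthant k →
      ‖Dφ (a + x)‖ ≤ (Φ + M * φ a) * Real.exp (M * ‖x‖) := by
  intro a ha x hax
  -- membership of the segment in the orthant
  have hmem : ∀ t ∈ Icc (0:ℝ) 1, a + t • x ∈ orthant k := by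
    intro t ht i
    have h1 := ha i
    have h2 := hax i
    have e1 : (a + t • x) i = a i + t * x i := by
      simp [PiLp.add_apply, PiLp.smul_apply, smul_eq_mul]
    have e2 : (a + x) i = a i + x i := by simp [PiLp.add_apply]
    rw [e1]
    rw [e2] at h2
    nlinarith [ht.1, ht.2]
  set f : ℝ → ℝ := fun t => φ (a + (min t 1) • x) with hf
  have hφ_cont : ContinuousOn φ (orthant k) := fun y hy => (hφ_diff y hy).continuousWithinAt
  have hγc : Continuous fun t : ℝ => a + (min t 1) • x := by fun_prop
  have hγmaps : ∀ t ∈ Icc (0:ℝ) 1, a + (min t 1) • x ∈ orthant k := by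
    intro t ht
    exact hmem _ ⟨le_min ht.1 zero_le_one, min_le_right _ _⟩
  have hfc : ContinuousOn f (Icc 0 1) :=
    hφ_cont.comp hγc.continuousOn hγmaps
  set g' : ℝ → ℝ := fun t => inner ℝ (Dφ (a + t • x)) x with hg'
  have hfd : ∀ t ∈ Ico (0:ℝ) 1, HasDerivWithinAt f (g' t) (Ici t) t := by
    intro t ht
    have h1 : HasDerivWithinAt (fun s : ℝ => a + s • x) x (Ici t ∩ Iio 1) t := by
      have : HasDerivAt (fun s : ℝ => a + s • x) x t := by
        simpa using ((hasDerivAt_id t).smul_const x).const_add a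
      exact this.hasDerivWithinAt
    have h2 : MapsTo (fun s : ℝ => a + s • x) (Ici t ∩ Iio 1) (orthant k) := by
      intro s hs
      exact hmem s ⟨le_trans ht.1 hs.1, hs.2.le⟩
    have h3 := (hφ_diff _ (hmem t ⟨ht.1, ht.2.le⟩)).comp_hasDerivWithinAt t h1 h2
    have h4 : HasDerivWithinAt f (g' t) (Ici t ∩ Iio 1) t := by
      refine h3.congr (fun s hs => ?_) ?_
      · simp [hf, Function.comp, min_eq_left (le_of_lt (show s < 1 from hs.2))]
      · simp [hf, Function.comp, min_eq_left ht.2.le]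
    exact (hasDerivWithinAt_inter (Iio_mem_nhds ht.2)).1 h4
  have hbd : ∀ t ∈ Ico (0:ℝ) 1, ‖g' t‖ ≤ (M * ‖x‖) * ‖f t‖ + Φ * ‖x‖ := by
    intro t ht
    have hmt : a + t • x ∈ orthant k := hmem t ⟨ht.1, ht.2.le⟩
    have h1 : ‖g' t‖ ≤ ‖Dφ (a + t • x)‖ * ‖x‖ := norm_inner_le_norm _ _
    have h2 : ‖Dφ (a + t • x)‖ ≤ Φ + M * φ (a + t • x) := hbound _ hmt
    have hft : f t = φ (a + t • x) := by simp [hf, min_eq_left ht.2.le]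
    have h3 : φ (a + t • x) ≤ ‖f t‖ := by rw [hft]; exact le_abs_self _
    have hx0 : (0:ℝ) ≤ ‖x‖ := norm_nonneg x
    nlinarith [mul_le_mul_of_nonneg_right h2 hx0, mul_le_mul_of_nonneg_left h3 (mul_nonneg hM hx0)]
  have ha0 : ‖f 0‖ ≤ φ a := by
    simp [hf, Real.norm_eq_abs, abs_of_nonneg (hφ_nonneg a ha)]
  have key := norm_le_gronwallBound_of_norm_deriv_right_le hfc hfd ha0 hbd 1
    ⟨zero_le_one, le_refl 1⟩
  have hf1 : f 1 = φ (a + x) := by simp [hf]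
  have hG : φ (a + x) ≤ gronwallBound (φ a) (M * ‖x‖) (Φ * ‖x‖) 1 := by
    calc φ (a + x) ≤ ‖f 1‖ := by rw [hf1]; exact le_abs_self _
    _ ≤ _ := by simpa using key
  have hDb : ‖Dφ (a + x)‖ ≤ Φ + M * φ (a + x) := hbound _ hax
  have hexp1 : (1:ℝ) ≤ Real.exp (M * ‖x‖) :=
    Real.one_le_exp (mul_nonneg hM (norm_nonneg x))
  by_cases hK : M * ‖x‖ = 0
  · simp [gronwallBound, hK] at hG
    have hΦx : Φ * ‖x‖ * 1 = Φ * ‖x‖ := mul_one _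
    have h0 : M * (Φ * ‖x‖) = Φ * (M * ‖x‖) := by ring
    have hφa : 0 ≤ φ a := hφ_nonneg a ha
    nlinarith [mul_le_mul_of_nonneg_left hG hM,
      mul_le_mul_of_nonneg_left hexp1 (by positivity : (0:ℝ) ≤ Φ + M * φ a)]
  · rw [gronwallBound_of_K_ne_0 hK] at hG
    have hM0 : M ≠ 0 := fun h => hK (by simp [h])
    have hx0 : ‖x‖ ≠ 0 := fun h => hK (by simp [h])
    have heq : Φ + M * (φ a * Real.exp (M * ‖x‖ * 1) +
        Φ * ‖x‖ / (M * ‖x‖) * (Real.exp (M * ‖x‖ * 1) - 1))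
        = (Φ + M * φ a) * Real.exp (M * ‖x‖) := by
      field_simp
      ring
    nlinarith [mul_le_mul_of_nonneg_left hG hM]
end
end
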